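/- arXiv:2204.03908 — 7 statements merged into one kernel-verified Lean document; each statement's English description precedes it below -/
import Mathlib

section
/- Let ω > 0 and let ξ be a real number with 0 < ξ < π/ω, and define G : [0,ω]×[0,ω] → ℝ by G(t,s) = cos(ξ(t−s−ω/2))/(2ξ sin(ξω/2)) if 0 ≤ s ≤ t ≤ ω and G(t,s) = cos(ξ(t−s+ω/2))/(2ξ sin(ξω/2)) if 0 ≤ t < s ≤ ω. Then G(t,s) > 0 for all (t,s) ∈ [0,ω]×[0,ω]. -/
open Real Set

theorem green_function_positive
    (ω ξ : ℝ) (hω : 0 < ω) (hξ : 0 < ξ) (hξπ : ξ < Real.pi / ω)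
    (G : ℝ → ℝ → ℝ)
    (hG : ∀ t ∈ Set.Icc 0 ω, ∀ s ∈ Set.Icc 0 ω,
      G t s = if s ≤ t then Real.cos (ξ * (t - s - ω / 2)) / (2 * ξ * Real.sin (ξ * ω / 2))
              else Real.cos (ξ * (t - s + ω / 2)) / (2 * ξ * Real.sin (ξ * ω / 2))) :
    ∀ t ∈ Set.Icc 0 ω, ∀ s ∈ Set.Icc 0 ω, 0 < G t s := by
  have hξω : ξ * ω < Real.pi := (lt_div_iff₀ hω).mp hξπ
  have hhalf : ξ * ω / 2 < Real.pi / 2 := by linarith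
  have hden : 0 < 2 * ξ * Real.sin (ξ * ω / 2) := by
    have hs : 0 < Real.sin (ξ * ω / 2) :=
      Real.sin_pos_of_pos_of_lt_pi (by positivity) (by linarith [Real.pi_pos])
    positivity
  intro t ht s hs
  rw [hG t ht s hs]
  obtain ⟨ht0, htω⟩ := ht
  obtain ⟨hs0, hsω⟩ := hs
  split_ifs with h
  · apply div_pos _ hden
    apply Real.cos_pos_of_mem_Ioo
    constructor
    · have : ξ * (t - s - ω / 2) ≥ ξ * (-(ω / 2)) := by nlinarith
      nlinarith
    · have : ξ * (t - s - ω / 2) ≤ ξ * (ω / 2) := by nlinarith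
      nlinarith
  · apply div_pos _ hden
    apply Real.cos_pos_of_mem_Ioo
    push_neg at h
    constructor
    · have : ξ * (t - s + ω / 2) ≥ ξ * (-(ω / 2)) := by nlinarith
      nlinarith
    · have : ξ * (t - s + ω / 2) ≤ ξ * (ω / 2) := by nlinarith
      nlinarith
end

section
/- Let ω > 0 and let ξ be a real number with 0 < ξ < π/ω, and define G : [0,ω]×[0,ω] → ℝ by G(t,s) = cos(ξ(t−s−ω/2))/(2ξ sin(ξω/2)) if 0 ≤ s ≤ t ≤ ω and G(t,s) = cos(ξ(t−s+ω/2))/(2ξ sin(ξω/2)) if 0 ≤ t < s ≤ ω. Then the minimum of G over [0,ω]×[0,ω] equals cos(ξω/2)/(2ξ sin(ξω/2)) and the maximum of G over [0,ω]×[0,ω] equals 1/(2ξ sin(ξω/2)); in particular the minimum is attained (e.g. at t = s = 0 with the pair (ω,0)-type corner, i.e. at points with |t−s| ∈ {0, ω}) and the maximum is attained at points with |t−s| = ω/2. -/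
open Real Set

theorem green_function_min_max
    (ω ξ : ℝ) (hω : 0 < ω) (hξ : 0 < ξ) (hξπ : ξ < Real.pi / ω)
    (G : ℝ → ℝ → ℝ)
    (hG : ∀ t ∈ Set.Icc 0 ω, ∀ s ∈ Set.Icc 0 ω,
      G t s = if s ≤ t then Real.cos (ξ * (t - s - ω / 2)) / (2 * ξ * Real.sin (ξ * ω / 2))
              else Real.cos (ξ * (t - s + ω / 2)) / (2 * ξ * Real.sin (ξ * ω / 2))) :
    (∀ t ∈ Set.Icc 0 ω, ∀ s ∈ Set.Icc 0 ω,
      Real.cos (ξ * ω / 2) / (2 * ξ * Real.sin (ξ * ω / 2)) ≤ G t s) ∧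
    (∃ t ∈ Set.Icc 0 ω, ∃ s ∈ Set.Icc 0 ω, (|t - s| = 0 ∨ |t - s| = ω) ∧
      G t s = Real.cos (ξ * ω / 2) / (2 * ξ * Real.sin (ξ * ω / 2))) ∧
    (∀ t ∈ Set.Icc 0 ω, ∀ s ∈ Set.Icc 0 ω,
      G t s ≤ 1 / (2 * ξ * Real.sin (ξ * ω / 2))) ∧
    (∃ t ∈ Set.Icc 0 ω, ∃ s ∈ Set.Icc 0 ω, |t - s| = ω / 2 ∧
      G t s = 1 / (2 * ξ * Real.sin (ξ * ω / 2))) := by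
  have hξω : ξ * ω < Real.pi := by
    rw [lt_div_iff₀ hω] at hξπ; linarith
  have hhalf : ξ * ω / 2 < Real.pi / 2 := by linarith
  have hhalfpos : 0 < ξ * ω / 2 := by positivity
  have hsin : 0 < Real.sin (ξ * ω / 2) := Real.sin_pos_of_pos_of_lt_pi hhalfpos
    (by linarith [Real.pi_pos])
  have hD : 0 < 2 * ξ * Real.sin (ξ * ω / 2) := by positivity
  -- key cosine bound
  have key : ∀ x : ℝ, |x| ≤ ξ * ω / 2 → Real.cos (ξ * ω / 2) ≤ Real.cos x := by
    intro x hx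
    rw [← Real.cos_abs x]
    exact Real.cos_le_cos_of_nonneg_of_le_pi (abs_nonneg x)
      (by linarith [Real.pi_pos]) hx
  refine ⟨?_, ?_, ?_, ?_⟩
  · intro t ht s hs
    rw [hG t ht s hs]
    rcases ht with ⟨ht0, ht1⟩; rcases hs with ⟨hs0, hs1⟩
    split_ifs with h
    · gcongr
      apply key
      rw [abs_le]
      constructor <;> nlinarith [abs_nonneg (t - s)]
    · gcongr
      apply key
      push_neg at h
      rw [abs_le]
      constructor <;> nlinarith
  · refine ⟨0, ⟨le_refl 0, hω.le⟩, 0, ⟨le_refl 0, hω.le⟩, Or.inl (by simp), ?_⟩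
    rw [hG 0 ⟨le_refl 0, hω.le⟩ 0 ⟨le_refl 0, hω.le⟩]
    simp only [le_refl, if_true]
    rw [show ξ * (0 - 0 - ω / 2) = -(ξ * ω / 2) by ring, Real.cos_neg]
  · intro t ht s hs
    rw [hG t ht s hs]
    split_ifs with h <;>
      { gcongr; exact Real.cos_le_one _ }
  · refine ⟨ω / 2, ⟨by linarith, by linarith⟩, 0, ⟨le_refl 0, hω.le⟩, by
      rw [abs_of_nonneg (by linarith)]; ring, ?_⟩
    rw [hG (ω/2) ⟨by linarith, by linarith⟩ 0 ⟨le_refl 0, hω.le⟩]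
    rw [if_pos (by linarith)]
    norm_num
end

section
/- Let ω > 0 and let p, l : ℝ → ℝ be continuous ω-periodic functions. Assume condition (A₁): there exist continuous ω-periodic functions a₁, a₂ : ℝ → ℝ, with a₁ continuously differentiable, such that ∫₀^ω a₁(t) dt > 0, ∫₀^ω a₂(t) dt > 0, a₁(t) + a₂(t) = p(t) and a₁'(t) + a₁(t)a₂(t) = l(t) for all t ∈ ℝ. Then every Green's function G of the ω-periodic problem u'' + p(t)u' + l(t)u = h(t), u(0) = u(ω), u'(0) = u'(ω), satisfies G(t,s) > 0 for all (t,s) ∈ [0,ω]×[0,ω]. -/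
open Real Set

/-- `G` is a Green's function for the `ω`-periodic problem
`u'' + p(t)u' + l(t)u = h(t)`, `u(0) = u(ω)`, `u'(0) = u'(ω)`. -/
def IsGreensFunction (ω : ℝ) (p l : ℝ → ℝ) (G : ℝ → ℝ → ℝ) : Prop :=
  ContinuousOn (fun ts : ℝ × ℝ => G ts.1 ts.2) (Set.Icc 0 ω ×ˢ Set.Icc 0 ω) ∧
  ContinuousOn (fun ts : ℝ × ℝ => deriv (fun t => G t ts.2) ts.1)
    (Set.Icc 0 ω ×ˢ Set.Icc 0 ω) ∧
  ∀ h : ℝ → ℝ, Continuous h → Function.Periodic h ω →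
    ContDiffOn ℝ 2 (fun t => ∫ s in (0:ℝ)..ω, G t s * h s) (Set.Icc 0 ω) ∧
    (∀ t ∈ Set.Icc 0 ω,
      deriv (deriv (fun t => ∫ s in (0:ℝ)..ω, G t s * h s)) t
        + p t * deriv (fun t => ∫ s in (0:ℝ)..ω, G t s * h s) t
        + l t * (∫ s in (0:ℝ)..ω, G t s * h s) = h t) ∧
    (∫ s in (0:ℝ)..ω, G 0 s * h s) = (∫ s in (0:ℝ)..ω, G ω s * h s) ∧
    deriv (fun t => ∫ s in (0:ℝ)..ω, G t s * h s) 0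
      = deriv (fun t => ∫ s in (0:ℝ)..ω, G t s * h s) ω

open MeasureTheory intervalIntegral Filter Topology


lemma firstOrder (ω : ℝ) (hω : 0 < ω) (a : ℝ → ℝ) (ha : Continuous a)
    (haint : 0 < ∫ t in (0:ℝ)..ω, a t) :
    ∃ c > 0, ∀ f g : ℝ → ℝ, ContinuousOn f (Icc 0 ω) → ContinuousOn g (Icc 0 ω) →
      (∀ x ∈ Icc 0 ω, 0 ≤ g x) → f 0 = f ω →
      (∀ x ∈ Ioo 0 ω, HasDerivAt f (g x - a x * f x) x) →
      ∀ x ∈ Icc 0 ω, c * ∫ t in (0:ℝ)..ω, g t ≤ f x := by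
  set A : ℝ → ℝ := fun t => ∫ s in (0:ℝ)..t, a s with hA
  have hAd : ∀ t, HasDerivAt A (a t) t := fun t => (ha.integral_hasStrictDerivAt 0 t).hasDerivAt
  have hAc : Continuous A := continuous_iff_continuousAt.2 fun t => (hAd t).continuousAt
  obtain ⟨C, hC⟩ := isCompact_Icc.exists_bound_of_continuousOn (hAc.continuousOn (s := Icc 0 ω))
  set E : ℝ → ℝ := fun t => exp (A t) with hE
  have hEd : ∀ t, HasDerivAt E (a t * E t) t := by
    intro t
    simpa [hE, mul_comm] using (hAd t).exp
  have hEc : Continuous E := Real.continuous_exp.comp hAc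
  have hEpos : ∀ t, 0 < E t := fun t => exp_pos _
  have hElb : ∀ t ∈ Icc 0 ω, exp (-C) ≤ E t := by
    intro t ht
    exact exp_le_exp.2 (neg_le_of_abs_le (by simpa using hC t ht))
  have hEub : ∀ t ∈ Icc 0 ω, E t ≤ exp C := by
    intro t ht
    exact exp_le_exp.2 (le_of_abs_le (by simpa using hC t ht))
  have hA0 : A 0 = 0 := intervalIntegral.integral_same
  have hE0 : E 0 = 1 := by simp [hE, hA0]
  have hEω : E ω = exp (∫ t in (0:ℝ)..ω, a t) := rfl
  have hD : 0 < E ω - 1 := by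
    rw [hEω]; nlinarith [Real.add_one_le_exp (∫ t in (0:ℝ)..ω, a t)]
  refine ⟨exp (-C) * exp (-C) / (E ω - 1), by positivity, ?_⟩
  intro f g hfc hgc hgnn hfper hfd x hx
  set F : ℝ → ℝ := fun t => E t * f t with hF
  have hFc : ContinuousOn F (Icc 0 ω) := (hEc.continuousOn).mul hfc
  have key : ∀ y ∈ Icc 0 ω, (∫ t in (0:ℝ)..y, E t * g t) = F y - F 0 := by
    intro y hy
    refine integral_eq_sub_of_hasDeriv_right_of_le hy.1 (hFc.mono (Icc_subset_Icc le_rfl hy.2)) ?_ ?_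
    · intro t ht
      have ht' : t ∈ Ioo 0 ω := ⟨ht.1, ht.2.trans_le hy.2⟩
      have h1 : HasDerivAt F (a t * E t * f t + E t * (g t - a t * f t)) t :=
        (hEd t).mul (hfd t ht')
      have h2 : a t * E t * f t + E t * (g t - a t * f t) = E t * g t := by ring
      rw [h2] at h1
      exact h1.hasDerivWithinAt
    · apply ContinuousOn.intervalIntegrable
      rw [uIcc_of_le hy.1]
      exact (hEc.continuousOn).mul (hgc.mono (Icc_subset_Icc le_rfl hy.2))
  have hEgInt : IntervalIntegrable (fun t => E t * g t) volume 0 ω := by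
    apply ContinuousOn.intervalIntegrable
    rw [uIcc_of_le hω.le]
    exact hEc.continuousOn.mul hgc
  have hgInt : IntervalIntegrable g volume 0 ω := by
    apply ContinuousOn.intervalIntegrable
    rwa [uIcc_of_le hω.le]
  have hIg : 0 ≤ ∫ t in (0:ℝ)..ω, g t := intervalIntegral.integral_nonneg hω.le hgnn
  have hlow : exp (-C) * ∫ t in (0:ℝ)..ω, g t ≤ ∫ t in (0:ℝ)..ω, E t * g t := by
    rw [← intervalIntegral.integral_const_mul]
    have hc1 : IntervalIntegrable (fun t => exp (-C) * g t) volume 0 ω := by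
      apply ContinuousOn.intervalIntegrable
      rw [uIcc_of_le hω.le]
      exact continuousOn_const.mul hgc
    apply integral_mono_on hω.le hc1 hEgInt
    intro t ht
    exact mul_le_mul_of_nonneg_right (hElb t ht) (hgnn t ht)
  have hkeyω := key ω ⟨hω.le, le_rfl⟩
  have hF0 : F 0 = f 0 := by simp [hF, hE0]
  have hf0 : f 0 * (E ω - 1) = ∫ t in (0:ℝ)..ω, E t * g t := by
    rw [hkeyω, hF0, hF, hfper]; ring
  have hf0nn : exp (-C) * (∫ t in (0:ℝ)..ω, g t) / (E ω - 1) ≤ f 0 := by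
    rw [div_le_iff₀ hD, hf0]
    exact hlow
  have hf0nn' : 0 ≤ f 0 := le_trans (by positivity) hf0nn
  -- F x ≥ F 0
  have hFx : F 0 ≤ F x := by
    have := key x hx
    have hnn : 0 ≤ ∫ t in (0:ℝ)..x, E t * g t := by
      apply intervalIntegral.integral_nonneg hx.1
      intro u hu
      have hu' : u ∈ Icc 0 ω := ⟨hu.1, hu.2.trans hx.2⟩
      exact mul_nonneg (hEpos u).le (hgnn u hu')
    linarith [this]
  -- conclude
  have h1 : f 0 ≤ f x * exp C := by
    have h2 : E x * f x ≥ f 0 := by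
      have : F x = E x * f x := rfl
      linarith [hFx, hF0]
    have hfxnn : 0 ≤ f x := by
      by_contra hneg
      push_neg at hneg
      nlinarith [hEpos x]
    nlinarith [hEub x hx, hEpos x]
  calc exp (-C) * exp (-C) / (E ω - 1) * ∫ t in (0:ℝ)..ω, g t
      = exp (-C) * (exp (-C) * (∫ t in (0:ℝ)..ω, g t) / (E ω - 1)) := by ring
    _ ≤ exp (-C) * f 0 := by
        apply mul_le_mul_of_nonneg_left hf0nn (by positivity)
    _ ≤ f x := by
        rw [Real.exp_neg]
        rw [inv_mul_le_iff₀ (exp_pos C)]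
        linarith [h1]


lemma deriv_eq_or (ω : ℝ) (hω : 0 < ω) (u : ℝ → ℝ)
    (hu : ContDiffOn ℝ 2 u (Icc 0 ω)) (e : ℝ) (he : e ∈ Icc 0 ω) :
    deriv u e = derivWithin u (Icc 0 ω) e ∨
      (deriv u e = 0 ∧ deriv (deriv u) e = 0) := by
  have hUD : UniqueDiffOn ℝ (Icc 0 ω) := uniqueDiffOn_Icc hω
  by_cases hdiff : DifferentiableAt ℝ u e
  · exact Or.inl (hdiff.derivWithin (hUD e he)).symm
  · have h₁ : deriv u e = 0 := deriv_zero_of_not_differentiableAt hdiff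
    by_cases hd0 : derivWithin u (Icc 0 ω) e = 0
    · exact Or.inl (by rw [h₁, hd0])
    · refine Or.inr ⟨h₁, ?_⟩
      have hu' : ContDiffOn ℝ 1 (derivWithin u (Icc 0 ω)) (Icc 0 ω) :=
        hu.derivWithin hUD (by norm_num)
      have hNe : (𝓝[Ioo 0 ω] e).NeBot := by
        rw [← mem_closure_iff_nhdsWithin_neBot, closure_Ioo hω.ne]
        exact he
      have hIooEq : ∀ x ∈ Ioo 0 ω, derivWithin u (Icc 0 ω) x = deriv u x := by
        intro x hx
        exact derivWithin_of_mem_nhds (Icc_mem_nhds hx.1 hx.2)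
      have hten : Tendsto (deriv u) (𝓝[Ioo 0 ω] e) (𝓝 (derivWithin u (Icc 0 ω) e)) := by
        have h2 : Tendsto (derivWithin u (Icc 0 ω)) (𝓝[Ioo 0 ω] e)
            (𝓝 (derivWithin u (Icc 0 ω) e)) :=
          ((hu'.continuousOn e he).mono Ioo_subset_Icc_self).tendsto
        exact h2.congr' (eventually_nhdsWithin_of_forall hIooEq)
      apply deriv_zero_of_not_differentiableAt
      intro hdd
      have h3 : Tendsto (deriv u) (𝓝[Ioo 0 ω] e) (𝓝 (deriv u e)) :=
        (hdd.continuousAt.tendsto).mono_left nhdsWithin_le_nhds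
      exact hd0 (by rw [tendsto_nhds_unique hten h3, h₁])
lemma interior_deriv (ω : ℝ) (hω : 0 < ω) (u : ℝ → ℝ)
    (hu : ContDiffOn ℝ 2 u (Icc 0 ω)) (x : ℝ) (hx : x ∈ Ioo 0 ω) :
    HasDerivAt u (derivWithin u (Icc 0 ω) x) x ∧
    HasDerivAt (derivWithin u (Icc 0 ω))
      (derivWithin (derivWithin u (Icc 0 ω)) (Icc 0 ω) x) x ∧
    deriv u x = derivWithin u (Icc 0 ω) x ∧
    deriv (deriv u) x = derivWithin (derivWithin u (Icc 0 ω)) (Icc 0 ω) x := by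
  have hUD : UniqueDiffOn ℝ (Icc 0 ω) := uniqueDiffOn_Icc hω
  have hIccN : Icc 0 ω ∈ 𝓝 x := Icc_mem_nhds hx.1 hx.2
  have hx' : x ∈ Icc 0 ω := Ioo_subset_Icc_self hx
  have hud : DifferentiableAt ℝ u x :=
    ((hu.differentiableOn (by norm_num)) x hx').differentiableAt hIccN
  have h1 : deriv u x = derivWithin u (Icc 0 ω) x := (derivWithin_of_mem_nhds hIccN).symm
  have hu' : ContDiffOn ℝ 1 (derivWithin u (Icc 0 ω)) (Icc 0 ω) :=
    hu.derivWithin hUD (by norm_num)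
  have hu'd : DifferentiableAt ℝ (derivWithin u (Icc 0 ω)) x :=
    ((hu'.differentiableOn (by norm_num)) x hx').differentiableAt hIccN
  have h2 : deriv (derivWithin u (Icc 0 ω)) x
      = derivWithin (derivWithin u (Icc 0 ω)) (Icc 0 ω) x := (derivWithin_of_mem_nhds hIccN).symm
  have hev : (deriv u) =ᶠ[𝓝 x] (derivWithin u (Icc 0 ω)) := by
    filter_upwards [isOpen_Ioo.mem_nhds hx] with y hy
    exact (derivWithin_of_mem_nhds (Icc_mem_nhds hy.1 hy.2)).symm
  refine ⟨?_, ?_, h1, ?_⟩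
  · rw [← h1]; exact hud.hasDerivAt
  · rw [← h2]; exact hu'd.hasDerivAt
  · rw [hev.deriv_eq, h2]


noncomputable def cbump (ω s₀ ε : ℝ) (s : ℝ) : ℝ :=
  max (Real.cos (2*π*(s-s₀)/ω) - Real.cos (2*π*ε/ω)) 0

section cbump
variable {ω s₀ ε : ℝ} (hω : 0 < ω) (hε : 0 < ε) (hs : ε < s₀) (hs' : ε < ω - s₀)

lemma cbump_cont : Continuous (cbump ω s₀ ε) := by
  apply Continuous.max _ continuous_const
  exact (Real.continuous_cos.comp (by continuity)).sub continuous_const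

include hω in
lemma cbump_periodic : Function.Periodic (cbump ω s₀ ε) ω := by
  intro s
  unfold cbump
  congr 2
  have h1 : 2*π*(s + ω - s₀)/ω = 2*π*(s-s₀)/ω + 2*π := by
    field_simp
    ring
  rw [h1, Real.cos_add_two_pi]

lemma cbump_nonneg (s : ℝ) : 0 ≤ cbump ω s₀ ε s := le_max_right _ _

include hω hε hs hs' in
lemma cbump_vanish {s : ℝ} (hsI : s ∈ Icc 0 ω) (hfar : ε ≤ |s - s₀|) :
    cbump ω s₀ ε s = 0 := by
  have hβπ : 2*π*ε/ω < π := by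
    rw [div_lt_iff₀ hω]
    nlinarith [pi_pos]
  have hβ0 : 0 < 2*π*ε/ω := by positivity
  apply max_eq_right
  rw [sub_nonpos]
  have habs : |2*π*(s-s₀)/ω| = 2*π*|s-s₀|/ω := by
    rw [abs_div, abs_mul, abs_of_pos (by positivity : (0:ℝ) < 2*π), abs_of_pos hω]
  have hcos : Real.cos (2*π*(s-s₀)/ω) = Real.cos (2*π*|s-s₀|/ω) := by
    rw [← habs, Real.cos_abs]
  rw [hcos]
  set φ := 2*π*|s-s₀|/ω with hφ
  have hφlb : 2*π*ε/ω ≤ φ := by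
    rw [hφ, div_le_div_iff₀ hω hω]
    nlinarith [pi_pos, mul_pos (mul_pos two_pos pi_pos) hω]
  have hrub : |s - s₀| ≤ ω - ε := by
    rw [abs_le]
    constructor <;> [nlinarith [hsI.1]; nlinarith [hsI.2]]
  have hφub : φ ≤ 2*π - 2*π*ε/ω := by
    have h5 : 2*π - 2*π*ε/ω = 2*π*(ω-ε)/ω := by field_simp
    rw [hφ, h5, div_le_div_iff₀ hω hω]
    nlinarith [pi_pos, mul_le_mul_of_nonneg_right hrub
      (by positivity : (0:ℝ) ≤ 2*π*ω)]
  by_cases hcase : φ ≤ π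
  · exact Real.cos_le_cos_of_nonneg_of_le_pi hβ0.le hcase hφlb
  · push_neg at hcase
    have h2 : Real.cos φ = Real.cos (2*π - φ) := by
      rw [Real.cos_two_pi_sub]
    rw [h2]
    exact Real.cos_le_cos_of_nonneg_of_le_pi hβ0.le (by linarith) (by linarith)

include hω hε hs hs' in
lemma cbump_pos {s : ℝ} (hnear : |s - s₀| ≤ ε/2) :
    Real.cos (2*π*(ε/2)/ω) - Real.cos (2*π*ε/ω) ≤ cbump ω s₀ ε s := by
  have hβπ : 2*π*ε/ω < π := by
    rw [div_lt_iff₀ hω]; nlinarith [pi_pos]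
  have habs : |2*π*(s-s₀)/ω| = 2*π*|s-s₀|/ω := by
    rw [abs_div, abs_mul, abs_of_pos (by positivity : (0:ℝ) < 2*π), abs_of_pos hω]
  have hcos : Real.cos (2*π*(s-s₀)/ω) = Real.cos (2*π*|s-s₀|/ω) := by
    rw [← habs, Real.cos_abs]
  refine le_trans ?_ (le_max_left _ _)
  apply sub_le_sub_right
  rw [hcos]
  apply Real.cos_le_cos_of_nonneg_of_le_pi (by positivity) (by
    have hhalf : 2*π*(ε/2)/ω = (2*π*ε/ω)/2 := by ring
    rw [hhalf]; linarith [pi_pos])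
  rw [div_le_div_iff₀ hω hω]
  nlinarith [pi_pos, mul_le_mul_of_nonneg_right hnear
    (by positivity : (0:ℝ) ≤ 2*π*ω)]

include hω hε hs hs' in
lemma cbump_peak_pos : 0 < Real.cos (2*π*(ε/2)/ω) - Real.cos (2*π*ε/ω) := by
  have hβπ : 2*π*ε/ω < π := by
    rw [div_lt_iff₀ hω]; nlinarith [pi_pos]
  rw [sub_pos]
  apply Real.cos_lt_cos_of_nonneg_of_le_pi (by positivity) hβπ.le
  rw [div_lt_div_iff₀ hω hω]
  nlinarith [mul_pos (mul_pos pi_pos hε) hω]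

include hω hε hs hs' in
lemma cbump_integral_pos : 0 < ∫ s in (0:ℝ)..ω, cbump ω s₀ ε s := by
  have hci : ∀ a b : ℝ, IntervalIntegrable (cbump ω s₀ ε) volume a b :=
    fun a b => (cbump_cont).intervalIntegrable a b
  have h1 : ∫ s in (0:ℝ)..ω, cbump ω s₀ ε s
      = (∫ s in (0:ℝ)..(s₀-ε/2), cbump ω s₀ ε s)
        + ((∫ s in (s₀-ε/2)..(s₀+ε/2), cbump ω s₀ ε s)
        + (∫ s in (s₀+ε/2)..ω, cbump ω s₀ ε s)) := by
    rw [integral_add_adjacent_intervals (hci _ _) (hci _ _),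
        integral_add_adjacent_intervals (hci _ _) (hci _ _)]
  rw [h1]
  have h2 : 0 ≤ ∫ s in (0:ℝ)..(s₀-ε/2), cbump ω s₀ ε s :=
    intervalIntegral.integral_nonneg (by linarith) (fun u _ => cbump_nonneg u)
  have h3 : 0 ≤ ∫ s in (s₀+ε/2)..ω, cbump ω s₀ ε s :=
    intervalIntegral.integral_nonneg (by linarith) (fun u _ => cbump_nonneg u)
  have h4 : 0 < ∫ s in (s₀-ε/2)..(s₀+ε/2), cbump ω s₀ ε s := by
    apply intervalIntegral_pos_of_pos_on (hci _ _) _ (by linarith)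
    intro x hx
    calc (0:ℝ) < Real.cos (2*π*(ε/2)/ω) - Real.cos (2*π*ε/ω) :=
          cbump_peak_pos hω hε hs hs'
      _ ≤ cbump ω s₀ ε x := by
          apply cbump_pos hω hε hs hs'
          rw [abs_le]; constructor <;> [linarith [hx.1]; linarith [hx.2]]
  linarith

include hω hε hs hs' in
lemma cbump_zero_at_zero : cbump ω s₀ ε 0 = 0 := by
  apply cbump_vanish hω hε hs hs' (left_mem_Icc.2 hω.le)
  rw [abs_sub_comm, abs_of_nonneg (by linarith)]
  linarith

end cbump

lemma cbump_approx (ω : ℝ) (hω : 0 < ω) (f : ℝ → ℝ) (hf : ContinuousOn f (Icc 0 ω))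
    (s₀ : ℝ) (hs₀ : s₀ ∈ Ioo 0 ω) (δ : ℝ) (hδ : 0 < δ) :
    ∃ ε, 0 < ε ∧ ε < s₀ ∧ ε < ω - s₀ ∧
      ((f s₀ - δ) * (∫ s in (0:ℝ)..ω, cbump ω s₀ ε s)
          ≤ ∫ s in (0:ℝ)..ω, f s * cbump ω s₀ ε s) ∧
      ((∫ s in (0:ℝ)..ω, f s * cbump ω s₀ ε s)
          ≤ (f s₀ + δ) * (∫ s in (0:ℝ)..ω, cbump ω s₀ ε s)) := by
  have hcw : ContinuousWithinAt f (Icc 0 ω) s₀ := hf s₀ (Ioo_subset_Icc_self hs₀)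
  rw [Metric.continuousWithinAt_iff] at hcw
  obtain ⟨r, hr, hrp⟩ := hcw δ hδ
  set ε := min (min (s₀/2) ((ω - s₀)/2)) (r/2) with hεdef
  have hε : 0 < ε := by
    apply lt_min (lt_min _ _) <;> linarith [hs₀.1, hs₀.2, hr]
  have hεs : ε < s₀ := by
    calc ε ≤ s₀/2 := le_trans (min_le_left _ _) (min_le_left _ _)
      _ < s₀ := by linarith [hs₀.1]
  have hεs' : ε < ω - s₀ := by
    calc ε ≤ (ω - s₀)/2 := le_trans (min_le_left _ _) (min_le_right _ _)
      _ < ω - s₀ := by linarith [hs₀.2]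
  have hεr : ε < r := by
    calc ε ≤ r/2 := min_le_right _ _
      _ < r := by linarith
  have hnear : ∀ s ∈ Icc 0 ω, cbump ω s₀ ε s ≠ 0 → |f s - f s₀| ≤ δ := by
    intro s hs hne
    have hcl : |s - s₀| < ε := by
      by_contra hfar
      push_neg at hfar
      exact hne (cbump_vanish hω hε hεs hεs' hs hfar)
    have := hrp hs (by rw [Real.dist_eq]; linarith)
    rw [Real.dist_eq] at this
    exact this.le
  have hbint : IntervalIntegrable (cbump ω s₀ ε) volume 0 ω :=
    cbump_cont.intervalIntegrable 0 ω
  have hfbint : IntervalIntegrable (fun s => f s * cbump ω s₀ ε s) volume 0 ω := by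
    apply ContinuousOn.intervalIntegrable
    rw [uIcc_of_le hω.le]
    exact hf.mul cbump_cont.continuousOn
  have hc1 : IntervalIntegrable (fun s => (f s₀ - δ) * cbump ω s₀ ε s) volume 0 ω :=
    hbint.const_mul _
  have hc2 : IntervalIntegrable (fun s => (f s₀ + δ) * cbump ω s₀ ε s) volume 0 ω :=
    hbint.const_mul _
  refine ⟨ε, hε, hεs, hεs', ?_, ?_⟩
  · rw [← intervalIntegral.integral_const_mul]
    apply integral_mono_on hω.le hc1 hfbint
    intro s hs
    rcases eq_or_ne (cbump ω s₀ ε s) 0 with hz | hz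
    · simp [hz]
    · have := hnear s hs hz
      have h9 : f s₀ - δ ≤ f s := by
        have h10 := abs_le.1 this
        linarith [h10.1]
      exact mul_le_mul_of_nonneg_right h9 (cbump_nonneg s)
  · rw [← intervalIntegral.integral_const_mul]
    apply integral_mono_on hω.le hfbint hc2
    intro s hs
    rcases eq_or_ne (cbump ω s₀ ε s) 0 with hz | hz
    · simp [hz]
    · have := hnear s hs hz
      have h9 : f s ≤ f s₀ + δ := by
        have h10 := abs_le.1 this
        linarith [h10.2]
      exact mul_le_mul_of_nonneg_right h9 (cbump_nonneg s)

lemma GB (ω : ℝ) (hω : 0 < ω) (p l a₁ a₂ : ℝ → ℝ)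
    (ha₁ : ContDiff ℝ 1 a₁) (ha₁per : Function.Periodic a₁ ω)
    (hsum : ∀ t, a₁ t + a₂ t = p t) (hprod : ∀ t, deriv a₁ t + a₁ t * a₂ t = l t)
    (c₁ c₂ : ℝ) (hc₁ : 0 < c₁) (hc₂ : 0 < c₂)
    (H₁ : ∀ f g : ℝ → ℝ, ContinuousOn f (Icc 0 ω) → ContinuousOn g (Icc 0 ω) →
      (∀ x ∈ Icc 0 ω, 0 ≤ g x) → f 0 = f ω →
      (∀ x ∈ Ioo 0 ω, HasDerivAt f (g x - a₁ x * f x) x) →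
      ∀ x ∈ Icc 0 ω, c₁ * ∫ t in (0:ℝ)..ω, g t ≤ f x)
    (H₂ : ∀ f g : ℝ → ℝ, ContinuousOn f (Icc 0 ω) → ContinuousOn g (Icc 0 ω) →
      (∀ x ∈ Icc 0 ω, 0 ≤ g x) → f 0 = f ω →
      (∀ x ∈ Ioo 0 ω, HasDerivAt f (g x - a₂ x * f x) x) →
      ∀ x ∈ Icc 0 ω, c₂ * ∫ t in (0:ℝ)..ω, g t ≤ f x)
    (u h : ℝ → ℝ) (hC2 : ContDiffOn ℝ 2 u (Icc 0 ω))
    (hODE : ∀ t ∈ Icc 0 ω, deriv (deriv u) t + p t * deriv u t + l t * u t = h t)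
    (hbc0 : u 0 = u ω)
    (hgood : derivWithin u (Icc 0 ω) 0 = derivWithin u (Icc 0 ω) ω)
    (hh : Continuous h) (hnn : ∀ y ∈ Icc 0 ω, 0 ≤ h y) :
    ∀ x ∈ Icc 0 ω, c₁ * (ω * (c₂ * ∫ s in (0:ℝ)..ω, h s)) ≤ u x := by
  intro x hx
  have hUD : UniqueDiffOn ℝ (Icc 0 ω) := uniqueDiffOn_Icc hω
  set u' : ℝ → ℝ := derivWithin u (Icc 0 ω) with hu'def
  set u'' : ℝ → ℝ := derivWithin u' (Icc 0 ω) with hu''def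
  have huc : ContinuousOn u (Icc 0 ω) := hC2.continuousOn
  have hu'c : ContinuousOn u' (Icc 0 ω) :=
    (hC2.derivWithin hUD (show (1:WithTop ℕ∞) + 1 ≤ 2 by norm_num)).continuousOn
  set v : ℝ → ℝ := fun t => u' t + a₁ t * u t with hvdef
  have hvc : ContinuousOn v (Icc 0 ω) :=
    hu'c.add ((ha₁.continuous.continuousOn).mul huc)
  have hODE' : ∀ y ∈ Ioo 0 ω, u'' y + p y * u' y + l y * u y = h y := by
    intro y hy
    obtain ⟨_, _, e1, e2⟩ := interior_deriv ω hω u hC2 y hy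
    have := hODE y (Ioo_subset_Icc_self hy)
    rw [e1, e2] at this
    exact this
  have hvd : ∀ y ∈ Ioo 0 ω, HasDerivAt v (h y - a₂ y * v y) y := by
    intro y hy
    obtain ⟨hd1, hd2, _, _⟩ := interior_deriv ω hω u hC2 y hy
    have ha₁d : HasDerivAt a₁ (deriv a₁ y) y :=
      ((ha₁.differentiable (by norm_num)) y).hasDerivAt
    have hsum' : HasDerivAt v (u'' y + (deriv a₁ y * u y + a₁ y * u' y)) y :=
      hd2.add (ha₁d.mul hd1)
    have heq : u'' y + (deriv a₁ y * u y + a₁ y * u' y) = h y - a₂ y * v y := by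
      have h1 := hODE' y hy
      have h2 := hsum y
      have h3 := hprod y
      simp only [hvdef]
      linear_combination h1 + u' y * h2 + u y * h3
    rw [heq] at hsum'
    exact hsum'
  have hv0 : v 0 = v ω := by
    have ha₁ω : a₁ ω = a₁ 0 := by simpa using ha₁per 0
    simp only [hvdef]
    rw [hgood, hbc0, ha₁ω]
  have stage1 : ∀ y ∈ Icc 0 ω, c₂ * (∫ t in (0:ℝ)..ω, h t) ≤ v y :=
    H₂ v h hvc hh.continuousOn hnn hv0 hvd
  have hIh : 0 ≤ ∫ t in (0:ℝ)..ω, h t := intervalIntegral.integral_nonneg hω.le hnn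
  have hvnn : ∀ y ∈ Icc 0 ω, 0 ≤ v y := fun y hy =>
    le_trans (by positivity) (stage1 y hy)
  have hud : ∀ y ∈ Ioo 0 ω, HasDerivAt u (v y - a₁ y * u y) y := by
    intro y hy
    obtain ⟨hd1, _, _, _⟩ := interior_deriv ω hω u hC2 y hy
    have : v y - a₁ y * u y = u' y := by simp only [hvdef]; ring
    rw [this]
    exact hd1
  have stage2 : ∀ y ∈ Icc 0 ω, c₁ * (∫ t in (0:ℝ)..ω, v t) ≤ u y :=
    H₁ u v huc hvc hvnn hbc0 hud
  have hvint : IntervalIntegrable v volume 0 ω := by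
    apply ContinuousOn.intervalIntegrable
    rwa [uIcc_of_le hω.le]
  have hintv : ω * (c₂ * ∫ t in (0:ℝ)..ω, h t) ≤ ∫ t in (0:ℝ)..ω, v t := by
    have hconst : ∫ t in (0:ℝ)..ω, (c₂ * ∫ s in (0:ℝ)..ω, h s)
        = ω * (c₂ * ∫ s in (0:ℝ)..ω, h s) := by
      simp [intervalIntegral.integral_const, smul_eq_mul]; ring
    rw [← hconst]
    exact integral_mono_on hω.le intervalIntegrable_const hvint stage1
  calc c₁ * (ω * (c₂ * ∫ s in (0:ℝ)..ω, h s))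
      ≤ c₁ * ∫ t in (0:ℝ)..ω, v t := mul_le_mul_of_nonneg_left hintv hc₁.le
    _ ≤ u x := stage2 x hx

lemma DI (ω : ℝ) (hω : 0 < ω) (p l : ℝ → ℝ) (hlper : Function.Periodic l ω)
    (u h : ℝ → ℝ) (hper : Function.Periodic h ω)
    (hC2 : ContDiffOn ℝ 2 u (Icc 0 ω))
    (hODE : ∀ t ∈ Icc 0 ω, deriv (deriv u) t + p t * deriv u t + l t * u t = h t)
    (hbc0 : u 0 = u ω) (hbc1 : deriv u 0 = deriv u ω) :
    derivWithin u (Icc 0 ω) 0 = derivWithin u (Icc 0 ω) ω ∨ l 0 * u 0 = h 0 := by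
  have h0m : (0:ℝ) ∈ Icc 0 ω := left_mem_Icc.2 hω.le
  have hωm : ω ∈ Icc 0 ω := right_mem_Icc.2 hω.le
  rcases deriv_eq_or ω hω u hC2 0 h0m with h0 | h0
  · rcases deriv_eq_or ω hω u hC2 ω hωm with hw | hw
    · left; rw [← h0, ← hw]; exact hbc1
    · right
      have := hODE ω hωm
      rw [hw.1, hw.2] at this
      have hlω : l ω = l 0 := by simpa using hlper 0
      have hhω : h ω = h 0 := by simpa using hper 0
      rw [hlω, hhω] at this
      rw [← hbc0] at this
      simpa using this
  · right
    have := hODE 0 h0m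
    rw [h0.1, h0.2] at this
    simpa using this


lemma int_lin (ω : ℝ) (hω : 0 < ω) (F h g : ℝ → ℝ) (hF : ContinuousOn F (Icc 0 ω))
    (hh : Continuous h) (hg : Continuous g) (μ : ℝ) :
    (∫ s in (0:ℝ)..ω, F s * (h s + μ * g s))
      = (∫ s in (0:ℝ)..ω, F s * h s) + μ * ∫ s in (0:ℝ)..ω, F s * g s := by
  have i1 : IntervalIntegrable (fun s => F s * h s) volume 0 ω := by
    apply ContinuousOn.intervalIntegrable
    rw [uIcc_of_le hω.le]
    exact hF.mul hh.continuousOn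
  have i2 : IntervalIntegrable (fun s => μ * (F s * g s)) volume 0 ω := by
    apply ContinuousOn.intervalIntegrable
    rw [uIcc_of_le hω.le]
    exact continuousOn_const.mul (hF.mul hg.continuousOn)
  rw [← intervalIntegral.integral_const_mul, ← intervalIntegral.integral_add i1 i2]
  apply intervalIntegral.integral_congr
  intro y _
  ring

lemma int_lin1 (ω : ℝ) (h g : ℝ → ℝ) (hh : Continuous h) (hg : Continuous g) (μ : ℝ) :
    (∫ s in (0:ℝ)..ω, (h s + μ * g s))
      = (∫ s in (0:ℝ)..ω, h s) + μ * ∫ s in (0:ℝ)..ω, g s := by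
  rw [intervalIntegral.integral_add (hh.intervalIntegrable 0 ω)
    (Continuous.intervalIntegrable (u := fun s => μ * g s) (continuous_const.mul hg) 0 ω), intervalIntegral.integral_const_mul]

theorem green_positive_of_condition_A1
    (ω : ℝ) (hω : 0 < ω) (p l : ℝ → ℝ)
    (hp : Continuous p) (hpper : Function.Periodic p ω)
    (hl : Continuous l) (hlper : Function.Periodic l ω)
    (a₁ a₂ : ℝ → ℝ)
    (ha₁ : ContDiff ℝ 1 a₁) (ha₁per : Function.Periodic a₁ ω)
    (ha₂ : Continuous a₂) (ha₂per : Function.Periodic a₂ ω)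
    (ha₁int : 0 < ∫ t in (0:ℝ)..ω, a₁ t)
    (ha₂int : 0 < ∫ t in (0:ℝ)..ω, a₂ t)
    (hsum : ∀ t, a₁ t + a₂ t = p t)
    (hprod : ∀ t, deriv a₁ t + a₁ t * a₂ t = l t) :
    ∀ G : ℝ → ℝ → ℝ, IsGreensFunction ω p l G →
      ∀ t ∈ Set.Icc 0 ω, ∀ s ∈ Set.Icc 0 ω, 0 < G t s := by
  intro G hG t₀ ht₀ s₀ hs₀
  obtain ⟨hGc, -, hGmain⟩ := hG
  have hGt : ∀ t ∈ Icc 0 ω, ContinuousOn (fun s => G t s) (Icc 0 ω) := by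
    intro t ht
    have h1 : ContinuousOn ((fun ts : ℝ × ℝ => G ts.1 ts.2) ∘ (fun s => (t, s)))
        (Icc 0 ω) := by
      apply hGc.comp (Continuous.continuousOn (by continuity))
      intro s hs
      exact ⟨ht, hs⟩
    simpa [Function.comp_def] using h1
  obtain ⟨c₁, hc₁, H₁⟩ := firstOrder ω hω a₁ ha₁.continuous ha₁int
  obtain ⟨c₂, hc₂, H₂⟩ := firstOrder ω hω a₂ ha₂ ha₂int
  have h0m : (0:ℝ) ∈ Icc 0 ω := left_mem_Icc.2 hω.le
  have KEY : ∀ h : ℝ → ℝ, Continuous h → Function.Periodic h ω → (∀ y, 0 ≤ h y) →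
      c₁ * (ω * (c₂ * ∫ s in (0:ℝ)..ω, h s)) ≤ ∫ s in (0:ℝ)..ω, G t₀ s * h s := by
    intro h hhc hhper hhnn
    by_contra hK
    push_neg at hK
    have NEX : ∀ g : ℝ → ℝ, Continuous g → Function.Periodic g ω → (∀ y, 0 ≤ g y) →
        ∃ lam, 0 < lam ∧ ∀ μ : ℝ, 0 < μ → μ < lam →
          l 0 * ((∫ s in (0:ℝ)..ω, G 0 s * h s) + μ * ∫ s in (0:ℝ)..ω, G 0 s * g s)
            = h 0 + μ * g 0 := by
      intro g hgc hgper hgnn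
      by_contra hno
      push_neg at hno
      have hmain : c₁ * (ω * (c₂ * ∫ s in (0:ℝ)..ω, h s))
          ≤ ∫ s in (0:ℝ)..ω, G t₀ s * h s := by
        apply le_of_forall_pos_le_add
        intro δ hδ
        set B : ℝ := |∫ s in (0:ℝ)..ω, G t₀ s * g s|
          + |c₁ * (ω * (c₂ * ∫ s in (0:ℝ)..ω, g s))| + 1 with hB
        have hBpos : 0 < B := by positivity
        obtain ⟨μ, hμ0, hμlt, hne⟩ := hno (min (δ / B) 1) (by positivity)
        set hμf : ℝ → ℝ := fun s => h s + μ * g s with hμfdef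
        have hμfc : Continuous hμf := hhc.add (continuous_const.mul hgc)
        have hμfper : Function.Periodic hμf ω := by
          intro x
          simp only [hμfdef, hhper x, hgper x]
        have hμfnn : ∀ y, 0 ≤ hμf y := fun y =>
          add_nonneg (hhnn y) (mul_nonneg hμ0.le (hgnn y))
        obtain ⟨hC2, hODE, hbc0, hbc1⟩ := hGmain hμf hμfc hμfper
        have e0 : (∫ s in (0:ℝ)..ω, G 0 s * hμf s)
            = (∫ s in (0:ℝ)..ω, G 0 s * h s) + μ * ∫ s in (0:ℝ)..ω, G 0 s * g s :=
          int_lin ω hω _ h g (hGt 0 h0m) hhc hgc μ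
        rcases DI ω hω p l hlper (fun t => ∫ s in (0:ℝ)..ω, G t s * hμf s) hμf hμfper
            hC2 hODE hbc0 hbc1 with hgood | hbad
        · have hgb := GB ω hω p l a₁ a₂ ha₁ ha₁per hsum hprod c₁ c₂ hc₁ hc₂ H₁ H₂
            (fun t => ∫ s in (0:ℝ)..ω, G t s * hμf s) hμf hC2 hODE hbc0 hgood hμfc
            (fun y _ => hμfnn y) t₀ ht₀
          have e1 : (∫ s in (0:ℝ)..ω, G t₀ s * hμf s)
              = (∫ s in (0:ℝ)..ω, G t₀ s * h s) + μ * ∫ s in (0:ℝ)..ω, G t₀ s * g s :=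
            int_lin ω hω _ h g (hGt t₀ ht₀) hhc hgc μ
          have e2 : (∫ s in (0:ℝ)..ω, hμf s)
              = (∫ s in (0:ℝ)..ω, h s) + μ * ∫ s in (0:ℝ)..ω, g s :=
            int_lin1 ω h g hhc hgc μ
          simp only [e1, e2] at hgb
          have hμB : μ * B ≤ δ := by
            have h5 : μ < δ / B := lt_of_lt_of_le hμlt (min_le_left _ _)
            rw [lt_div_iff₀ hBpos] at h5
            exact h5.le
          have h6 := le_abs_self (∫ s in (0:ℝ)..ω, G t₀ s * g s)
          have h7 := neg_abs_le (c₁ * (ω * (c₂ * ∫ s in (0:ℝ)..ω, g s)))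
          nlinarith [hgb, hμ0.le]
        · rw [e0] at hbad
          exact absurd hbad hne
      linarith
    have LEQ : ∀ g : ℝ → ℝ, Continuous g → Function.Periodic g ω → (∀ y, 0 ≤ g y) →
        l 0 * (∫ s in (0:ℝ)..ω, G 0 s * g s) = g 0 := by
      intro g hgc hgper hgnn
      obtain ⟨lam, hlam, hall⟩ := NEX g hgc hgper hgnn
      have e1 := hall (lam/2) (by linarith) (by linarith)
      have e2 := hall (lam/3) (by linarith) (by linarith)
      have h8 : (lam/2 - lam/3) * (l 0 * (∫ s in (0:ℝ)..ω, G 0 s * g s) - g 0) = 0 := by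
        linear_combination e1 - e2
      rcases mul_eq_zero.1 h8 with h9 | h9
      · exfalso; linarith
      · linarith
    have Lone : l 0 * (∫ s in (0:ℝ)..ω, G 0 s * 1) = 1 := by
      have := LEQ (fun _ => 1) continuous_const (fun x => rfl) (fun y => zero_le_one)
      simpa using this
    have hl0 : l 0 ≠ 0 := by
      intro h9
      rw [h9, zero_mul] at Lone
      exact zero_ne_one Lone
    have Lbump : ∀ s' ε : ℝ, 0 < ε → ε < s' → ε < ω - s' →
        (∫ s in (0:ℝ)..ω, G 0 s * cbump ω s' ε s) = 0 := by
      intro s' ε he h1 h2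
      have h3 := LEQ (cbump ω s' ε) cbump_cont (cbump_periodic hω) cbump_nonneg
      rw [cbump_zero_at_zero hω he h1 h2] at h3
      exact (mul_eq_zero.1 h3).resolve_left hl0
    have hG0 : ∀ s' ∈ Ioo 0 ω, G 0 s' = 0 := by
      intro s' hs'
      have habs : ∀ δ : ℝ, 0 < δ → |G 0 s'| ≤ δ := by
        intro δ hδ
        obtain ⟨ε, he, h1, h2, hlow, hup⟩ :=
          cbump_approx ω hω (fun s => G 0 s) (hGt 0 h0m) s' hs' δ hδ
        have hz := Lbump s' ε he h1 h2
        rw [hz] at hlow hup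
        have hbpos := cbump_integral_pos hω he h1 h2
        rw [abs_le]
        constructor
        · nlinarith
        · nlinarith
      have h10 : |G 0 s'| ≤ 0 := by
        apply le_of_forall_pos_le_add
        intro δ hδ
        simpa using habs δ hδ
      exact abs_eq_zero.1 (le_antisymm h10 (abs_nonneg _))
    have hG0' : ∀ y ∈ Icc 0 ω, G 0 y = 0 := by
      intro y hy
      have hNe : (𝓝[Ioo 0 ω] y).NeBot := by
        rw [← mem_closure_iff_nhdsWithin_neBot, closure_Ioo hω.ne]
        exact hy
      have ht1 : Tendsto (fun s => G 0 s) (𝓝[Ioo 0 ω] y) (𝓝 (G 0 y)) :=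
        (((hGt 0 h0m) y hy).mono Ioo_subset_Icc_self).tendsto
      have ht2 : Tendsto (fun s => G 0 s) (𝓝[Ioo 0 ω] y) (𝓝 0) :=
        Tendsto.congr' (eventually_nhdsWithin_of_forall
          (fun z hz => (hG0 z hz).symm)) tendsto_const_nhds
      exact tendsto_nhds_unique ht1 ht2
    have hzero : (∫ s in (0:ℝ)..ω, G 0 s * 1) = 0 := by
      have heq : EqOn (fun s => G 0 s * 1) (fun _ => (0:ℝ)) (uIcc 0 ω) := by
        intro y hy
        rw [uIcc_of_le hω.le] at hy
        simp [hG0' y hy]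
      rw [intervalIntegral.integral_congr heq]
      simp
    rw [hzero, mul_zero] at Lone
    exact zero_ne_one Lone
  have hGe : ∀ s' ∈ Ioo 0 ω, c₁ * (ω * c₂) ≤ G t₀ s' := by
    intro s' hs'
    apply le_of_forall_pos_le_add
    intro δ hδ
    obtain ⟨ε, he, h1, h2, hlow, hup⟩ :=
      cbump_approx ω hω (fun s => G t₀ s) (hGt t₀ ht₀) s' hs' δ hδ
    have hk := KEY (cbump ω s' ε) cbump_cont (cbump_periodic hω) cbump_nonneg
    have hbpos := cbump_integral_pos hω he h1 h2
    nlinarith [hk, hup, hbpos]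
  have hfin : c₁ * (ω * c₂) ≤ G t₀ s₀ := by
    have hNe : (𝓝[Ioo 0 ω] s₀).NeBot := by
      rw [← mem_closure_iff_nhdsWithin_neBot, closure_Ioo hω.ne]
      exact hs₀
    have ht1 : Tendsto (fun s => G t₀ s) (𝓝[Ioo 0 ω] s₀) (𝓝 (G t₀ s₀)) :=
      (((hGt t₀ ht₀) s₀ hs₀).mono Ioo_subset_Icc_self).tendsto
    exact ge_of_tendsto ht1 (eventually_nhdsWithin_of_forall hGe)
  have hcpos : 0 < c₁ * (ω * c₂) := by positivity
  linarith
end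

section
/- Fix ω > 0, ρ₁ > 0, ρ₂ > 0 and set α = 1/(ρ₁+1). Let p, q, b : ℝ → ℝ be continuous ω-periodic functions and c, e : ℝ → (0,∞) continuous ω-periodic functions. Then a twice continuously differentiable ω-periodic function x : ℝ → (0,∞) satisfies x''(t) + p(t)x'(t) + q(t)x(t) = b(t)/x(t)^{ρ₁} + c(t)/x(t)^{ρ₂} + e(t) for all t if and only if the function y = x^{1/α} = x^{ρ₁+1} is a twice continuously differentiable ω-periodic function with values in (0,∞) satisfying y''(t) + p(t)y'(t) + (q(t)/α)y(t) = (c(t)/α)y(t)^{1−α−αρ₂} + (e(t)/α)y(t)^{1−α} + (1−α)|y'(t)|²/y(t) + b(t)/α for all t. -/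
open Real Set

private lemma algebra_key (ρ₁ ρ₂ X X' X'' P Q B C E : ℝ) (hX : 0 < X) (h1 : 0 < ρ₁)
    (A K : ℝ) (hA0 : 0 < A) (hK0 : 0 < K) :
    (X'' + P*X' + Q*X = B/A + C/K + E) ↔
    ((ρ₁+1)*(ρ₁*(A/X)*X'*X' + A*X'') + P*((ρ₁+1)*A*X') + (Q*(ρ₁+1))*(A*X)
      = (C*(ρ₁+1))*(A/K) + (E*(ρ₁+1))*A + (ρ₁/(ρ₁+1))*((ρ₁+1)*A*X')^2/(A*X) + B*(ρ₁+1)) := by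
  have hr : (0:ℝ) < ρ₁ + 1 := by linarith
  have key : ((ρ₁+1)*(ρ₁*(A/X)*X'*X' + A*X'') + P*((ρ₁+1)*A*X') + (Q*(ρ₁+1))*(A*X))
      - ((C*(ρ₁+1))*(A/K) + (E*(ρ₁+1))*A + (ρ₁/(ρ₁+1))*((ρ₁+1)*A*X')^2/(A*X) + B*(ρ₁+1))
      = ((ρ₁+1)*A) * ((X'' + P*X' + Q*X) - (B/A + C/K + E)) := by
    field_simp
    ring
  rw [← sub_eq_zero, ← sub_eq_zero (a := (ρ₁+1)*(ρ₁*(A/X)*X'*X' + A*X'') + P*((ρ₁+1)*A*X') + (Q*(ρ₁+1))*(A*X)), key, mul_eq_zero]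
  have : (ρ₁+1)*A ≠ 0 := by positivity
  tauto

theorem transformation_equivalence
    (ω ρ₁ ρ₂ α : ℝ) (hω : 0 < ω) (hρ₁ : 0 < ρ₁) (hρ₂ : 0 < ρ₂)
    (hα : α = 1 / (ρ₁ + 1))
    (p q b c e : ℝ → ℝ)
    (hp : Continuous p) (hpper : Function.Periodic p ω)
    (hq : Continuous q) (hqper : Function.Periodic q ω)
    (hb : Continuous b) (hbper : Function.Periodic b ω)
    (hc : Continuous c) (hcper : Function.Periodic c ω) (hcpos : ∀ t, 0 < c t)
    (he : Continuous e) (heper : Function.Periodic e ω) (hepos : ∀ t, 0 < e t)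
    (x : ℝ → ℝ) (hx : ContDiff ℝ 2 x) (hxper : Function.Periodic x ω)
    (hxpos : ∀ t, 0 < x t) :
    (∀ t, deriv (deriv x) t + p t * deriv x t + q t * x t =
        b t / x t ^ ρ₁ + c t / x t ^ ρ₂ + e t) ↔
    (ContDiff ℝ 2 (fun t => x t ^ (ρ₁ + 1)) ∧
      Function.Periodic (fun t => x t ^ (ρ₁ + 1)) ω ∧
      (∀ t, 0 < x t ^ (ρ₁ + 1)) ∧
      (∀ t, deriv (deriv (fun τ => x τ ^ (ρ₁ + 1))) t
          + p t * deriv (fun τ => x τ ^ (ρ₁ + 1)) t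
          + (q t / α) * x t ^ (ρ₁ + 1) =
        (c t / α) * (x t ^ (ρ₁ + 1)) ^ (1 - α - α * ρ₂)
          + (e t / α) * (x t ^ (ρ₁ + 1)) ^ (1 - α)
          + (1 - α) * |deriv (fun τ => x τ ^ (ρ₁ + 1)) t| ^ 2 / x t ^ (ρ₁ + 1)
          + b t / α)) := by
  have hr : (0:ℝ) < ρ₁ + 1 := by linarith
  have hαne : α ≠ 0 := by rw [hα]; positivity
  have hdivα : ∀ r : ℝ, r / α = r * (ρ₁ + 1) := by
    intro r; rw [hα]; field_simp
  have h1α : 1 - α = ρ₁ / (ρ₁ + 1) := by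
    rw [hα]; field_simp; ring
  -- smoothness of y
  have hy2 : ContDiff ℝ 2 (fun t => x t ^ (ρ₁ + 1)) := by
    have : (fun t => x t ^ (ρ₁ + 1)) = fun t => Real.exp (Real.log (x t) * (ρ₁ + 1)) := by
      funext t; rw [Real.rpow_def_of_pos (hxpos t)]
    rw [this]
    exact Real.contDiff_exp.comp ((hx.log fun t => (hxpos t).ne').mul contDiff_const)
  have hyper : Function.Periodic (fun t => x t ^ (ρ₁ + 1)) ω := by
    intro t; simp [hxper t]
  have hypos : ∀ t, 0 < x t ^ (ρ₁ + 1) := fun t => rpow_pos_of_pos (hxpos t) _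
  -- differentiability facts
  have hx1 : Differentiable ℝ x := hx.differentiable (by norm_num)
  have hdx : Differentiable ℝ (deriv x) := by
    have h : ContDiff ℝ ((1:ℕ∞)+1) x := by exact_mod_cast hx
    rw [contDiff_succ_iff_deriv] at h
    exact h.2.2.differentiable (by norm_num)
  -- first derivative of y
  have d1 : ∀ t, HasDerivAt (fun τ => x τ ^ (ρ₁ + 1)) ((ρ₁+1) * x t ^ ρ₁ * deriv x t) t := by
    intro t
    have h := (hx1 t).hasDerivAt.rpow_const (p := ρ₁ + 1) (Or.inl (hxpos t).ne')
    rw [add_sub_cancel_right] at h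
    convert h using 1; ring
  have hderiv_y : deriv (fun τ => x τ ^ (ρ₁ + 1)) = fun t => (ρ₁+1) * x t ^ ρ₁ * deriv x t :=
    funext fun t => (d1 t).deriv
  -- second derivative of y
  have d2 : ∀ t, deriv (deriv (fun τ => x τ ^ (ρ₁ + 1))) t
      = (ρ₁+1) * ((ρ₁ * x t ^ (ρ₁ - 1) * deriv x t) * deriv x t + x t ^ ρ₁ * deriv (deriv x) t) := by
    intro t
    rw [hderiv_y]
    have hrp : HasDerivAt (fun τ => x τ ^ ρ₁) (ρ₁ * x t ^ (ρ₁ - 1) * deriv x t) t := by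
      have h := (hx1 t).hasDerivAt.rpow_const (p := ρ₁) (Or.inl (hxpos t).ne')
      convert h using 1; ring
    have h := (hrp.mul (hdx t).hasDerivAt).const_mul (ρ₁ + 1)
    have heq : (fun t => (ρ₁+1) * x t ^ ρ₁ * deriv x t)
        = fun τ => (ρ₁+1) * (x τ ^ ρ₁ * deriv x τ) := by funext τ; ring
    rw [heq]
    exact h.deriv
  -- equivalence of the equations at each point
  have main : ∀ t, (deriv (deriv x) t + p t * deriv x t + q t * x t =
        b t / x t ^ ρ₁ + c t / x t ^ ρ₂ + e t) ↔
      (deriv (deriv (fun τ => x τ ^ (ρ₁ + 1))) t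
          + p t * deriv (fun τ => x τ ^ (ρ₁ + 1)) t
          + (q t / α) * x t ^ (ρ₁ + 1) =
        (c t / α) * (x t ^ (ρ₁ + 1)) ^ (1 - α - α * ρ₂)
          + (e t / α) * (x t ^ (ρ₁ + 1)) ^ (1 - α)
          + (1 - α) * |deriv (fun τ => x τ ^ (ρ₁ + 1)) t| ^ 2 / x t ^ (ρ₁ + 1)
          + b t / α) := by
    intro t
    have hX := hxpos t
    have hA0 : 0 < x t ^ ρ₁ := rpow_pos_of_pos hX _
    have hK0 : 0 < x t ^ ρ₂ := rpow_pos_of_pos hX _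
    have e1 : (x t ^ (ρ₁ + 1)) ^ (1 - α - α * ρ₂) = x t ^ ρ₁ / x t ^ ρ₂ := by
      rw [← Real.rpow_mul hX.le]
      have hexp : (ρ₁ + 1) * (1 - α - α * ρ₂) = ρ₁ - ρ₂ := by
        rw [hα]; field_simp; ring
      rw [hexp, Real.rpow_sub hX]
    have e2 : (x t ^ (ρ₁ + 1)) ^ (1 - α) = x t ^ ρ₁ := by
      rw [← Real.rpow_mul hX.le]
      have hexp : (ρ₁ + 1) * (1 - α) = ρ₁ := by
        rw [hα]; field_simp; ring
      rw [hexp]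
    have e3 : x t ^ (ρ₁ + 1) = x t ^ ρ₁ * x t := by
      rw [Real.rpow_add hX, Real.rpow_one]
    have e4 : x t ^ (ρ₁ - 1) = x t ^ ρ₁ / x t := by
      rw [Real.rpow_sub hX, Real.rpow_one]
    rw [d2 t, hderiv_y, e1, e2, e4, e3, sq_abs, hdivα, hdivα, hdivα, hdivα, h1α]
    exact algebra_key ρ₁ ρ₂ (x t) (deriv x t) (deriv (deriv x) t)
      (p t) (q t) (b t) (c t) (e t) hX hρ₁ _ _ hA0 hK0
  exact ⟨fun h => ⟨hy2, hyper, hypos, fun t => (main t).mp (h t)⟩,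
    fun h t => (main t).mpr (h.2.2.2 t)⟩
end

section
/- The differential equation x''(t) + (1/40)x(t) = (1 + 2cos(3t))/x(t)^{3/2} + e^{2sin(3t)}/x(t)^{13/10} + 10 + cos(3t) has at least one positive (2π/3)-periodic solution, i.e. there exists a twice continuously differentiable function x : ℝ → (0,∞) with x(t + 2π/3) = x(t) for all t that satisfies the equation for all t ∈ ℝ. -/
open Real BoundedContinuousFunction NNReal ENNReal intervalIntegral

namespace Ex41

noncomputable def om : ℝ := Real.sqrt (1/40)
noncomputable def T : ℝ := 2 * Real.pi / 3

lemma om_pos : 0 < om := Real.sqrt_pos.2 (by norm_num)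
lemma om_sq : om ^ 2 = 1/40 := Real.sq_sqrt (by norm_num)
lemma om_lt_one : om < 1 := by
  rw [om, show (1:ℝ) = Real.sqrt 1 by simp]
  exact Real.sqrt_lt_sqrt (by norm_num) (by norm_num)
lemma T_pos : 0 < T := by have := Real.pi_pos; unfold T; linarith
lemma omT2_pos : 0 < om * T / 2 := by have := om_pos; have := T_pos; positivity
lemma omT2_lt : om * T / 2 < Real.pi / 2 := by
  have h1 : om * T ≤ 1 * T := mul_le_mul_of_nonneg_right om_lt_one.le T_pos.le
  have := Real.pi_pos
  unfold T at *; nlinarith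
lemma sin_omT2_pos : 0 < Real.sin (om * T / 2) := by
  apply Real.sin_pos_of_pos_of_lt_pi omT2_pos
  have := Real.pi_pos; linarith [omT2_lt]

noncomputable def gc : ℝ := 1 / (2 * om * Real.sin (om * T / 2))
lemma gc_pos : 0 < gc := by
  unfold gc; have := om_pos; have := sin_omT2_pos; positivity
lemma gc_id : gc * (2 * om * Real.sin (om * T / 2)) = 1 := by
  unfold gc
  have h := om_pos; have h2 := sin_omT2_pos
  field_simp

noncomputable def Cg (g : ℝ → ℝ) (t : ℝ) : ℝ := ∫ s in (0:ℝ)..t, Real.cos (om*s) * g s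
noncomputable def Sg (g : ℝ → ℝ) (t : ℝ) : ℝ := ∫ s in (0:ℝ)..t, Real.sin (om*s) * g s
noncomputable def Lop (g : ℝ → ℝ) (t : ℝ) : ℝ :=
  gc * (Real.cos (om*(t+T/2)) * (Cg g (t+T) - Cg g t)
      + Real.sin (om*(t+T/2)) * (Sg g (t+T) - Sg g t))
noncomputable def Lop' (g : ℝ → ℝ) (t : ℝ) : ℝ :=
  gc * om * (-(Real.sin (om*(t+T/2)) * (Cg g (t+T) - Cg g t))
      + Real.cos (om*(t+T/2)) * (Sg g (t+T) - Sg g t))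

lemma Lop_eq_integral (g : ℝ → ℝ) (hg : Continuous g) (t : ℝ) :
    Lop g t = gc * ∫ s in t..(t+T), Real.cos (om*(t+T/2-s)) * g s := by
  have hcg : Continuous fun s => Real.cos (om*s) * g s := by fun_prop
  have hsg : Continuous fun s => Real.sin (om*s) * g s := by fun_prop
  have hC : Cg g (t+T) - Cg g t = ∫ s in t..(t+T), Real.cos (om*s) * g s :=
    intervalIntegral.integral_interval_sub_left (hcg.intervalIntegrable _ _)
      (hcg.intervalIntegrable _ _)
  have hS : Sg g (t+T) - Sg g t = ∫ s in t..(t+T), Real.sin (om*s) * g s :=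
    intervalIntegral.integral_interval_sub_left (hsg.intervalIntegrable _ _)
      (hsg.intervalIntegrable _ _)
  have hi : ∀ s, Real.cos (om*(t+T/2-s)) * g s
      = Real.cos (om*(t+T/2)) * (Real.cos (om*s) * g s)
        + Real.sin (om*(t+T/2)) * (Real.sin (om*s) * g s) := by
    intro s
    rw [show om*(t+T/2-s) = om*(t+T/2) - om*s by ring, Real.cos_sub]; ring
  rw [intervalIntegral.integral_congr (g := fun s => Real.cos (om*(t+T/2)) * (Real.cos (om*s) * g s)
        + Real.sin (om*(t+T/2)) * (Real.sin (om*s) * g s)) (fun s _ => hi s),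
    intervalIntegral.integral_add ((hcg.intervalIntegrable _ _).const_mul _)
      ((hsg.intervalIntegrable _ _).const_mul _),
    intervalIntegral.integral_const_mul, intervalIntegral.integral_const_mul]
  unfold Lop
  rw [hC, hS]

lemma hasDerivAt_Cg (g : ℝ → ℝ) (hg : Continuous g) (u : ℝ) :
    HasDerivAt (Cg g) (Real.cos (om*u) * g u) u := by
  have hcg : Continuous fun s => Real.cos (om*s) * g s := by fun_prop
  exact (hcg.integral_hasStrictDerivAt 0 u).hasDerivAt

lemma hasDerivAt_Sg (g : ℝ → ℝ) (hg : Continuous g) (u : ℝ) :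
    HasDerivAt (Sg g) (Real.sin (om*u) * g u) u := by
  have hsg : Continuous fun s => Real.sin (om*s) * g s := by fun_prop
  exact (hsg.integral_hasStrictDerivAt 0 u).hasDerivAt

lemma hasDerivAt_Lop (g : ℝ → ℝ) (hg : Continuous g) (hp : ∀ s, g (s + T) = g s) (t : ℝ) :
    HasDerivAt (Lop g) (Lop' g t) t := by
  have hC := hasDerivAt_Cg g hg
  have hS := hasDerivAt_Sg g hg
  have hshift : HasDerivAt (fun u : ℝ => u + T) 1 t := (hasDerivAt_id t).add_const T
  have hCs : HasDerivAt (fun u => Cg g (u+T)) (Real.cos (om*(t+T)) * g (t+T)) t := by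
    have := (hC (t+T)).comp t hshift; rw [mul_one] at this; exact this
  have hSs : HasDerivAt (fun u => Sg g (u+T)) (Real.sin (om*(t+T)) * g (t+T)) t := by
    have := (hS (t+T)).comp t hshift; rw [mul_one] at this; exact this
  have hlin : HasDerivAt (fun u : ℝ => om*(u+T/2)) om t := by
    simpa using ((hasDerivAt_id t).add_const (T/2)).const_mul om
  have hcosθ : HasDerivAt (fun u => Real.cos (om*(u+T/2))) (-Real.sin (om*(t+T/2)) * om) t :=
    (Real.hasDerivAt_cos _).comp t hlin
  have hsinθ : HasDerivAt (fun u => Real.sin (om*(u+T/2))) (Real.cos (om*(t+T/2)) * om) t :=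
    (Real.hasDerivAt_sin _).comp t hlin
  have key := (((hcosθ.mul (hCs.sub (hC t))).add (hsinθ.mul (hSs.sub (hS t)))).const_mul gc)
  have hD : Lop' g t = gc * ((-Real.sin (om*(t+T/2)) * om * (Cg g (t+T) - Cg g t)
      + Real.cos (om*(t+T/2)) * (Real.cos (om*(t+T)) * g (t+T) - Real.cos (om*t) * g t))
      + (Real.cos (om*(t+T/2)) * om * (Sg g (t+T) - Sg g t)
      + Real.sin (om*(t+T/2)) * (Real.sin (om*(t+T)) * g (t+T) - Real.sin (om*t) * g t))) := by
    have e1 : Real.cos (om*(t+T/2)) * Real.cos (om*(t+T))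
        + Real.sin (om*(t+T/2)) * Real.sin (om*(t+T)) = Real.cos (om*T/2) := by
      rw [← Real.cos_sub, show om*(t+T/2) - om*(t+T) = -(om*T/2) by ring, Real.cos_neg]
    have e2 : Real.cos (om*(t+T/2)) * Real.cos (om*t)
        + Real.sin (om*(t+T/2)) * Real.sin (om*t) = Real.cos (om*T/2) := by
      rw [← Real.cos_sub, show om*(t+T/2) - om*t = om*T/2 by ring]
    rw [hp t]
    unfold Lop'
    linear_combination gc * g t * e2 - gc * g t * e1
  rw [hD]
  exact key

lemma hasDerivAt_Lop' (g : ℝ → ℝ) (hg : Continuous g) (hp : ∀ s, g (s + T) = g s) (t : ℝ) :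
    HasDerivAt (Lop' g) (g t - om^2 * Lop g t) t := by
  have hC := hasDerivAt_Cg g hg
  have hS := hasDerivAt_Sg g hg
  have hshift : HasDerivAt (fun u : ℝ => u + T) 1 t := (hasDerivAt_id t).add_const T
  have hCs : HasDerivAt (fun u => Cg g (u+T)) (Real.cos (om*(t+T)) * g (t+T)) t := by
    have := (hC (t+T)).comp t hshift; rw [mul_one] at this; exact this
  have hSs : HasDerivAt (fun u => Sg g (u+T)) (Real.sin (om*(t+T)) * g (t+T)) t := by
    have := (hS (t+T)).comp t hshift; rw [mul_one] at this; exact this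
  have hlin : HasDerivAt (fun u : ℝ => om*(u+T/2)) om t := by
    simpa using ((hasDerivAt_id t).add_const (T/2)).const_mul om
  have hcosθ : HasDerivAt (fun u => Real.cos (om*(u+T/2))) (-Real.sin (om*(t+T/2)) * om) t :=
    (Real.hasDerivAt_cos _).comp t hlin
  have hsinθ : HasDerivAt (fun u => Real.sin (om*(u+T/2))) (Real.cos (om*(t+T/2)) * om) t :=
    (Real.hasDerivAt_sin _).comp t hlin
  have key := ((((hsinθ.mul (hCs.sub (hC t))).neg).add (hcosθ.mul (hSs.sub (hS t)))).const_mul (gc * om))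
  have hD : g t - om^2 * Lop g t = gc * om * (-(Real.cos (om*(t+T/2)) * om * (Cg g (t+T) - Cg g t)
      + Real.sin (om*(t+T/2)) * (Real.cos (om*(t+T)) * g (t+T) - Real.cos (om*t) * g t))
      + (-Real.sin (om*(t+T/2)) * om * (Sg g (t+T) - Sg g t)
      + Real.cos (om*(t+T/2)) * (Real.sin (om*(t+T)) * g (t+T) - Real.sin (om*t) * g t))) := by
    have f1 : Real.sin (om*(t+T)) * Real.cos (om*(t+T/2))
        - Real.cos (om*(t+T)) * Real.sin (om*(t+T/2)) = Real.sin (om*T/2) := by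
      rw [← Real.sin_sub, show om*(t+T) - om*(t+T/2) = om*T/2 by ring]
    have f2 : Real.sin (om*t) * Real.cos (om*(t+T/2))
        - Real.cos (om*t) * Real.sin (om*(t+T/2)) = -Real.sin (om*T/2) := by
      rw [← Real.sin_sub, show om*t - om*(t+T/2) = -(om*T/2) by ring, Real.sin_neg]
    have hgid := gc_id
    rw [hp t]
    unfold Lop
    linear_combination (-(g t)) * hgid - (gc * om * g t) * f1 + (gc * om * g t) * f2
  rw [hD]
  exact key

lemma Lop_periodic (g : ℝ → ℝ) (hg : Continuous g) (hp : ∀ s, g (s + T) = g s) (t : ℝ) :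
    Lop g (t + T) = Lop g t := by
  rw [Lop_eq_integral g hg, Lop_eq_integral g hg]
  congr 1
  have hc := intervalIntegral.integral_comp_add_right (a := t) (b := t+T)
      (f := fun s => Real.cos (om*(t+T+T/2-s)) * g s) T
  rw [← hc]
  apply intervalIntegral.integral_congr
  intro x _
  show Real.cos (om*(t+T+T/2-(x+T))) * g (x+T) = Real.cos (om*(t+T/2-x)) * g x
  rw [hp x, show om*(t+T+T/2-(x+T)) = om*(t+T/2-x) by ring]

lemma Lop_bounds (g : ℝ → ℝ) (hg : Continuous g) {a b : ℝ} (ha : ∀ s, a ≤ g s)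
    (hb : ∀ s, g s ≤ b) (t : ℝ) : 40*a ≤ Lop g t ∧ Lop g t ≤ 40*b := by
  have hcg : Continuous fun s => Real.cos (om*(t+T/2-s)) * g s := by fun_prop
  have hker : ∀ s ∈ Set.Icc t (t+T), 0 ≤ Real.cos (om*(t+T/2-s)) := by
    intro s hs
    obtain ⟨hs1, hs2⟩ := hs
    apply Real.cos_nonneg_of_mem_Icc
    have k1 : om*(t+T/2-s) ≤ om*(T/2) := mul_le_mul_of_nonneg_left (by linarith) om_pos.le
    have k2 : om*(-(T/2)) ≤ om*(t+T/2-s) := mul_le_mul_of_nonneg_left (by linarith) om_pos.le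
    have := omT2_lt
    constructor
    · nlinarith
    · nlinarith
  have hle : t ≤ t + T := by have := T_pos; linarith
  -- value of the kernel integral
  have hu : ∀ s : ℝ, HasDerivAt (fun r => om*(t+T/2-r)) (-om) s := by
    intro s
    have h0 : HasDerivAt (fun r : ℝ => (t+T/2) - r) (-1) s := (hasDerivAt_id s).const_sub (t+T/2)
    simpa using h0.const_mul om
  have hanti : ∀ s ∈ Set.uIcc t (t+T), HasDerivAt (fun r => -(Real.sin (om*(t+T/2-r)) / om))
      (Real.cos (om*(t+T/2-s))) s := by
    intro s _
    have h := (((Real.hasDerivAt_sin (om*(t+T/2-s))).comp s (hu s)).div_const om).neg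
    refine HasDerivAt.congr_deriv (f := fun r => -(Real.sin (om*(t+T/2-r)) / om)) h ?_
    have h3 : om ≠ 0 := om_pos.ne'
    rw [mul_neg, neg_div, neg_neg, mul_div_assoc, div_self h3, mul_one]
  have hint : (∫ s in t..(t+T), Real.cos (om*(t+T/2-s))) = 2 * Real.sin (om*T/2) / om := by
    rw [intervalIntegral.integral_eq_sub_of_hasDerivAt hanti
      ((by fun_prop : Continuous fun s => Real.cos (om*(t+T/2-s))).intervalIntegrable _ _)]
    rw [show om*(t+T/2-(t+T)) = -(om*T/2) by ring, show om*(t+T/2-t) = om*T/2 by ring,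
      Real.sin_neg]
    ring
  have h3 : om ≠ 0 := om_pos.ne'
  have h2 : om * om = 1/40 := by have := om_sq; nlinarith
  have h5 : gc * (2 * Real.sin (om*T/2)) = 40 * om :=
    mul_right_cancel₀ h3 (by linear_combination gc_id - 40*h2)
  have h40 : gc * (2 * Real.sin (om*T/2) / om) = 40 := by
    field_simp
    linear_combination h5
  constructor
  · have hmono : (∫ s in t..(t+T), Real.cos (om*(t+T/2-s)) * a)
        ≤ ∫ s in t..(t+T), Real.cos (om*(t+T/2-s)) * g s := by
      apply intervalIntegral.integral_mono_on hle
        ((by fun_prop : Continuous fun s => Real.cos (om*(t+T/2-s)) * a).intervalIntegrable _ _)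
        (hcg.intervalIntegrable _ _)
      intro s hs
      exact mul_le_mul_of_nonneg_left (ha s) (hker s hs)
    rw [intervalIntegral.integral_mul_const, hint] at hmono
    have := mul_le_mul_of_nonneg_left hmono gc_pos.le
    rw [Lop_eq_integral g hg]
    calc 40*a = gc * (2 * Real.sin (om*T/2) / om * a) := by rw [← mul_assoc, h40]
      _ ≤ _ := this
  · have hmono : (∫ s in t..(t+T), Real.cos (om*(t+T/2-s)) * g s)
        ≤ ∫ s in t..(t+T), Real.cos (om*(t+T/2-s)) * b := by
      apply intervalIntegral.integral_mono_on hle (hcg.intervalIntegrable _ _)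
        ((by fun_prop : Continuous fun s => Real.cos (om*(t+T/2-s)) * b).intervalIntegrable _ _)
      intro s hs
      exact mul_le_mul_of_nonneg_left (hb s) (hker s hs)
    rw [intervalIntegral.integral_mul_const, hint] at hmono
    have := mul_le_mul_of_nonneg_left hmono gc_pos.le
    rw [Lop_eq_integral g hg]
    calc gc * ∫ s in t..(t+T), Real.cos (om*(t+T/2-s)) * g s ≤ gc * (2 * Real.sin (om*T/2) / om * b) := this
      _ = 40*b := by rw [← mul_assoc, h40]

lemma Lop_sub (g1 g2 : ℝ → ℝ) (h1 : Continuous g1) (h2 : Continuous g2) (t : ℝ) :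
    Lop (fun s => g1 s - g2 s) t = Lop g1 t - Lop g2 t := by
  have hc1 : Continuous fun s => Real.cos (om*s) * g1 s := by fun_prop
  have hc2 : Continuous fun s => Real.cos (om*s) * g2 s := by fun_prop
  have hs1 : Continuous fun s => Real.sin (om*s) * g1 s := by fun_prop
  have hs2 : Continuous fun s => Real.sin (om*s) * g2 s := by fun_prop
  have iC : ∀ u : ℝ, Cg (fun s => g1 s - g2 s) u = Cg g1 u - Cg g2 u := by
    intro u
    unfold Cg
    rw [← intervalIntegral.integral_sub (hc1.intervalIntegrable _ _) (hc2.intervalIntegrable _ _)]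
    apply intervalIntegral.integral_congr
    intro s _; ring
  have iS : ∀ u : ℝ, Sg (fun s => g1 s - g2 s) u = Sg g1 u - Sg g2 u := by
    intro u
    unfold Sg
    rw [← intervalIntegral.integral_sub (hs1.intervalIntegrable _ _) (hs2.intervalIntegrable _ _)]
    apply intervalIntegral.integral_congr
    intro s _; ring
  unfold Lop
  rw [iC, iC, iS, iS]
  ring




noncomputable def Fnl (t y : ℝ) : ℝ :=
  (1 + 2 * Real.cos (3 * t)) / y ^ ((3:ℝ)/2)
    + Real.exp (2 * Real.sin (3 * t)) / y ^ ((13:ℝ)/10) + 10 + Real.cos (3 * t)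

lemma rpow_lower {y : ℝ} (hy : 320 ≤ y) {p : ℝ} (hp : 1 ≤ p) : 320 ≤ y ^ p := by
  have h1 : (1:ℝ) ≤ y := by linarith
  calc (320:ℝ) ≤ y := hy
    _ = y ^ (1:ℝ) := (Real.rpow_one y).symm
    _ ≤ y ^ p := Real.rpow_le_rpow_of_exponent_le h1 hp

lemma exp_two_le : Real.exp 2 ≤ 8 := by
  have h := Real.exp_one_lt_d9
  have h2 : Real.exp 2 = Real.exp 1 * Real.exp 1 := by
    rw [← Real.exp_add]; norm_num
  nlinarith [Real.exp_pos 1]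

lemma Fnl_bounds (t y : ℝ) (h1 : 320 ≤ y) (h2 : y ≤ 480) : 8 ≤ Fnl t y ∧ Fnl t y ≤ 12 := by
  have hA : (320:ℝ) ≤ y ^ ((3:ℝ)/2) := rpow_lower h1 (by norm_num)
  have hB : (320:ℝ) ≤ y ^ ((13:ℝ)/10) := rpow_lower h1 (by norm_num)
  have hApos : (0:ℝ) < y ^ ((3:ℝ)/2) := by linarith
  have hBpos : (0:ℝ) < y ^ ((13:ℝ)/10) := by linarith
  have hc1 := Real.neg_one_le_cos (3*t)
  have hc2 := Real.cos_le_one (3*t)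
  have t1u : (1 + 2*Real.cos (3*t)) / y ^ ((3:ℝ)/2) ≤ 3/320 :=
    div_le_div₀ (by norm_num) (by linarith) (by norm_num) hA
  have t1l : -(3/320 : ℝ) ≤ (1 + 2*Real.cos (3*t)) / y ^ ((3:ℝ)/2) := by
    have := div_le_div₀ (c := (3:ℝ)) (by norm_num) (by linarith : -(1 + 2*Real.cos (3*t)) ≤ 3)
      (by norm_num) hA
    rw [neg_div] at this
    linarith
  have t2l : (0:ℝ) ≤ Real.exp (2 * Real.sin (3*t)) / y ^ ((13:ℝ)/10) := by positivity
  have t2u : Real.exp (2 * Real.sin (3*t)) / y ^ ((13:ℝ)/10) ≤ 8/320 := by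
    have hs := Real.sin_le_one (3*t)
    have he : Real.exp (2 * Real.sin (3*t)) ≤ 8 :=
      le_trans (Real.exp_le_exp.2 (by linarith)) exp_two_le
    exact div_le_div₀ (by norm_num) he (by norm_num) hB
  constructor
  · unfold Fnl; linarith
  · unfold Fnl; linarith

lemma inv_rpow_lip {p : ℝ} (hp1 : 1 ≤ p) (hp2 : p ≤ 2) {y z : ℝ} (hy : 320 ≤ y) (hz : 320 ≤ z) :
    |(y ^ p)⁻¹ - (z ^ p)⁻¹| ≤ p / 102400 * |y - z| := by
  set s : Set ℝ := Set.Ici (320:ℝ) with hs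
  have hconv : Convex ℝ s := convex_Ici _
  have hderiv : ∀ w ∈ s, HasDerivWithinAt (fun w => (w ^ p)⁻¹)
      (-(p * w ^ (p-1)) / (w ^ p)^2) s w := by
    intro w hw
    have hwpos : (0:ℝ) < w := lt_of_lt_of_le (by norm_num) hw
    have hne : w ^ p ≠ 0 := (Real.rpow_pos_of_pos hwpos p).ne'
    exact ((Real.hasDerivAt_rpow_const (Or.inl hwpos.ne')).inv hne).hasDerivWithinAt
  have hbound : ∀ w ∈ s, ‖-(p * w ^ (p-1)) / (w ^ p)^2‖ ≤ p / 102400 := by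
    intro w hw
    have hwpos : (0:ℝ) < w := lt_of_lt_of_le (by norm_num) hw
    have e : p * w ^ (p-1) / (w ^ p)^2 = p * w ^ (-(p+1)) := by
      rw [sq, ← Real.rpow_add hwpos, mul_div_assoc, ← Real.rpow_sub hwpos]
      congr 2
      ring
    have hnorm : ‖-(p * w ^ (p-1)) / (w ^ p)^2‖ = p * w ^ (-(p+1)) := by
      rw [Real.norm_eq_abs, abs_div, abs_neg, abs_of_nonneg, abs_of_nonneg, e]
      · positivity
      · positivity
    rw [hnorm]
    have k1 : (102400:ℝ) ≤ w ^ (p+1) := by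
      calc (102400:ℝ) = (320:ℝ) ^ ((2:ℕ):ℝ) := by rw [Real.rpow_natCast]; norm_num
        _ ≤ (320:ℝ) ^ (p+1) := Real.rpow_le_rpow_of_exponent_le (by norm_num) (by push_cast; linarith)
        _ ≤ w ^ (p+1) := Real.rpow_le_rpow (by norm_num) hw (by linarith)
    have k2 : w ^ (-(p+1)) ≤ 1/102400 := by
      rw [Real.rpow_neg hwpos.le]
      rw [one_div]
      exact inv_anti₀ (by norm_num) k1
    calc p * w ^ (-(p+1)) ≤ p * (1/102400) :=
        mul_le_mul_of_nonneg_left k2 (by linarith)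
      _ = p / 102400 := by ring
  have := hconv.norm_image_sub_le_of_norm_hasDerivWithin_le hderiv hbound
    (Set.mem_Ici.2 hz) (Set.mem_Ici.2 hy)
  simpa [Real.norm_eq_abs] using this

lemma Fnl_lip (t y z : ℝ) (hy : 320 ≤ y) (hz : 320 ≤ z) :
    |Fnl t y - Fnl t z| ≤ (1/100) * |y - z| := by
  have l1 := inv_rpow_lip (p := (3:ℝ)/2) (by norm_num) (by norm_num) hy hz
  have l2 := inv_rpow_lip (p := (13:ℝ)/10) (by norm_num) (by norm_num) hy hz
  have ha : |1 + 2*Real.cos (3*t)| ≤ 3 := by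
    have := Real.neg_one_le_cos (3*t); have := Real.cos_le_one (3*t)
    rw [abs_le]; constructor <;> linarith
  have hb : |Real.exp (2*Real.sin (3*t))| ≤ 8 := by
    rw [abs_of_pos (Real.exp_pos _)]
    exact le_trans (Real.exp_le_exp.2 (by linarith [Real.sin_le_one (3*t)])) exp_two_le
  have key : Fnl t y - Fnl t z
      = (1+2*Real.cos (3*t)) * ((y ^ ((3:ℝ)/2))⁻¹ - (z ^ ((3:ℝ)/2))⁻¹)
        + Real.exp (2*Real.sin (3*t)) * ((y ^ ((13:ℝ)/10))⁻¹ - (z ^ ((13:ℝ)/10))⁻¹) := by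
    unfold Fnl
    rw [div_eq_mul_inv, div_eq_mul_inv, div_eq_mul_inv, div_eq_mul_inv]
    ring
  rw [key]
  have b1 : |(1+2*Real.cos (3*t)) * ((y ^ ((3:ℝ)/2))⁻¹ - (z ^ ((3:ℝ)/2))⁻¹)|
      ≤ 3 * ((3:ℝ)/2 / 102400 * |y-z|) := by
    rw [abs_mul]
    exact mul_le_mul ha l1 (abs_nonneg _) (by norm_num)
  have b2 : |Real.exp (2*Real.sin (3*t)) * ((y ^ ((13:ℝ)/10))⁻¹ - (z ^ ((13:ℝ)/10))⁻¹)|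
      ≤ 8 * ((13:ℝ)/10 / 102400 * |y-z|) := by
    rw [abs_mul]
    exact mul_le_mul hb l2 (abs_nonneg _) (by norm_num)
  calc |_ + _| ≤ _ := abs_add_le _ _
    _ ≤ 3 * ((3:ℝ)/2 / 102400 * |y-z|) + 8 * ((13:ℝ)/10 / 102400 * |y-z|) := add_le_add b1 b2
    _ ≤ (1/100) * |y - z| := by nlinarith [abs_nonneg (y-z)]

lemma Fnl_continuous (x : ℝ → ℝ) (hx : Continuous x) (hpos : ∀ t, 320 ≤ x t) :
    Continuous fun t => Fnl t (x t) := by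
  unfold Fnl
  have h1 : Continuous fun t => x t ^ ((3:ℝ)/2) :=
    hx.rpow_const (fun t => Or.inr (by norm_num))
  have h2 : Continuous fun t => x t ^ ((13:ℝ)/10) :=
    hx.rpow_const (fun t => Or.inr (by norm_num))
  have n1 : ∀ t, x t ^ ((3:ℝ)/2) ≠ 0 :=
    fun t => (Real.rpow_pos_of_pos (by linarith [hpos t]) _).ne'
  have n2 : ∀ t, x t ^ ((13:ℝ)/10) ≠ 0 :=
    fun t => (Real.rpow_pos_of_pos (by linarith [hpos t]) _).ne'
  have c1 : Continuous fun t => (1 + 2 * Real.cos (3 * t)) := by fun_prop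
  have c2 : Continuous fun t => Real.exp (2 * Real.sin (3 * t)) := by fun_prop
  exact (((c1.div h1 n1).add (c2.div h2 n2)).add continuous_const).add (by fun_prop)

lemma Fnl_periodic (t y : ℝ) : Fnl (t + T) y = Fnl t y := by
  unfold Fnl
  rw [show 3 * (t + T) = 3 * t + 2 * Real.pi by unfold T; ring,
    Real.cos_add_two_pi, Real.sin_add_two_pi]



def D : Set (ℝ →ᵇ ℝ) := {f | (∀ t, f (t + T) = f t) ∧ ∀ t, f t ∈ Set.Icc (320:ℝ) 480}

lemma isClosed_D : IsClosed D := by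
  have hD : D = (⋂ t : ℝ, {f : ℝ →ᵇ ℝ | f (t + T) = f t}) ∩
      (⋂ t : ℝ, {f : ℝ →ᵇ ℝ | f t ∈ Set.Icc (320:ℝ) 480}) := by
    ext f
    simp [D, Set.mem_iInter, forall_and]
  rw [hD]
  exact (isClosed_iInter fun t => isClosed_eq
      (continuous_eval_const _)
      (continuous_eval_const _)).inter
    (isClosed_iInter fun t =>
      (isClosed_Icc.preimage (continuous_eval_const _)))

noncomputable def NI (f : ↥D) : ℝ → ℝ := fun t => Fnl t ((f : ℝ →ᵇ ℝ) t)

lemma NI_cont (f : ↥D) : Continuous (NI f) :=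
  Fnl_continuous _ (f : ℝ →ᵇ ℝ).continuous (fun t => (f.2.2 t).1)
lemma NI_per (f : ↥D) : ∀ s, NI f (s + T) = NI f s := by
  intro s; unfold NI; rw [f.2.1 s, Fnl_periodic]
lemma NI_lb (f : ↥D) : ∀ s, 8 ≤ NI f s := fun s => (Fnl_bounds s _ (f.2.2 s).1 (f.2.2 s).2).1
lemma NI_ub (f : ↥D) : ∀ s, NI f s ≤ 12 := fun s => (Fnl_bounds s _ (f.2.2 s).1 (f.2.2 s).2).2

lemma LopNI_cont (f : ↥D) : Continuous (Lop (NI f)) := by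
  have h : Differentiable ℝ (Lop (NI f)) :=
    fun t => (hasDerivAt_Lop _ (NI_cont f) (NI_per f) t).differentiableAt
  exact h.continuous

lemma LopNI_mem (f : ↥D) : ∀ t, Lop (NI f) t ∈ Set.Icc (320:ℝ) 480 := by
  intro t
  have h := Lop_bounds (NI f) (NI_cont f) (NI_lb f) (NI_ub f) t
  exact ⟨by linarith [h.1], by linarith [h.2]⟩

noncomputable def Phi (f : ↥D) : ↥D :=
  ⟨BoundedContinuousFunction.mkOfBound ⟨Lop (NI f), LopNI_cont f⟩ 160
    (fun a b => by
      obtain ⟨h1, h2⟩ := LopNI_mem f a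
      obtain ⟨h3, h4⟩ := LopNI_mem f b
      simp only [ContinuousMap.coe_mk]
      rw [Real.dist_eq, abs_le]
      constructor <;> linarith),
   ⟨fun t => Lop_periodic _ (NI_cont f) (NI_per f) t, fun t => LopNI_mem f t⟩⟩

lemma Phi_coe (f : ↥D) (t : ℝ) : ((Phi f : ↥D) : ℝ →ᵇ ℝ) t = Lop (NI f) t := rfl

lemma Phi_contracting : ContractingWith (2/5 : ℝ≥0) Phi := by
  constructor
  · rw [← NNReal.coe_lt_coe]
    norm_num
  · apply LipschitzWith.of_dist_le_mul
    intro f h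
    have hc : ((2/5 : ℝ≥0) : ℝ) = 2/5 := by norm_num
    rw [Subtype.dist_eq, Subtype.dist_eq, hc]
    have hnn : (0:ℝ) ≤ 2/5 * dist (f : ℝ →ᵇ ℝ) (h : ℝ →ᵇ ℝ) :=
      mul_nonneg (by norm_num) dist_nonneg
    rw [BoundedContinuousFunction.dist_le hnn]
    intro t
    have hdiff : ∀ s, |NI f s - NI h s| ≤ 1/100 * dist (f : ℝ →ᵇ ℝ) (h : ℝ →ᵇ ℝ) := by
      intro s
      have hl := Fnl_lip s ((f : ℝ →ᵇ ℝ) s) ((h : ℝ →ᵇ ℝ) s) (f.2.2 s).1 (h.2.2 s).1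
      have hd := BoundedContinuousFunction.dist_coe_le_dist
        (f := (f : ℝ →ᵇ ℝ)) (g := (h : ℝ →ᵇ ℝ)) s
      rw [Real.dist_eq] at hd
      calc |NI f s - NI h s| ≤ 1/100 * |(f : ℝ →ᵇ ℝ) s - (h : ℝ →ᵇ ℝ) s| := hl
        _ ≤ 1/100 * dist (f : ℝ →ᵇ ℝ) (h : ℝ →ᵇ ℝ) := by linarith
    have hb := Lop_bounds (fun s => NI f s - NI h s) ((NI_cont f).sub (NI_cont h))
      (a := -(1/100 * dist (f : ℝ →ᵇ ℝ) (h : ℝ →ᵇ ℝ)))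
      (b := 1/100 * dist (f : ℝ →ᵇ ℝ) (h : ℝ →ᵇ ℝ))
      (fun s => (abs_le.1 (hdiff s)).1) (fun s => (abs_le.1 (hdiff s)).2) t
    rw [Lop_sub _ _ (NI_cont f) (NI_cont h) t] at hb
    have : dist ((Phi f : ℝ →ᵇ ℝ) t) ((Phi h : ℝ →ᵇ ℝ) t)
        = |Lop (NI f) t - Lop (NI h) t| := by
      rw [Phi_coe, Phi_coe, Real.dist_eq]
    rw [this, abs_le]
    constructor <;> [linarith [hb.1]; linarith [hb.2]]


end Ex41

open Ex41 in
theorem example_4_1 :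
    ∃ x : ℝ → ℝ,
      ContDiff ℝ 2 x ∧ (∀ t, 0 < x t) ∧
      (∀ t, x (t + 2 * Real.pi / 3) = x t) ∧
      ∀ t, deriv (deriv x) t + (1 / 40) * x t =
        (1 + 2 * Real.cos (3 * t)) / x t ^ ((3 : ℝ) / 2)
          + Real.exp (2 * Real.sin (3 * t)) / x t ^ ((13 : ℝ) / 10)
          + 10 + Real.cos (3 * t) := by
  haveI : CompleteSpace ↥D := isClosed_D.completeSpace_coe
  haveI : Nonempty ↥D := ⟨⟨BoundedContinuousFunction.const ℝ (400:ℝ),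
    fun t => rfl, fun t => by constructor <;> norm_num [BoundedContinuousFunction.const_apply]⟩⟩
  obtain ⟨xD, hfix⟩ : ∃ xD : ↥D, Phi xD = xD :=
    ⟨ContractingWith.fixedPoint Phi Phi_contracting,
      ContractingWith.fixedPoint_isFixedPt Phi_contracting⟩
  set x : ℝ → ℝ := fun t => (xD : ℝ →ᵇ ℝ) t with hxdef
  have hmem : ∀ t, x t ∈ Set.Icc (320:ℝ) 480 := fun t => xD.2.2 t
  have hEq : Lop (NI xD) = x := by
    funext t
    have h := congrArg (fun (v : ↥D) => ((v : ℝ →ᵇ ℝ) t)) hfix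
    simpa [Phi_coe] using h
  have hgc := NI_cont xD
  have hgp := NI_per xD
  have hd1 : ∀ t, HasDerivAt x (Lop' (NI xD) t) t := by
    intro t
    have := hasDerivAt_Lop (NI xD) hgc hgp t
    rwa [hEq] at this
  have hderiv1 : deriv x = Lop' (NI xD) := funext fun t => (hd1 t).deriv
  have hd2 : ∀ t, HasDerivAt (Lop' (NI xD)) (NI xD t - om^2 * x t) t := by
    intro t
    have := hasDerivAt_Lop' (NI xD) hgc hgp t
    rwa [hEq] at this
  have hderiv2 : ∀ t, deriv (deriv x) t = NI xD t - om^2 * x t := by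
    intro t
    rw [hderiv1]
    exact (hd2 t).deriv
  refine ⟨x, ?_, ?_, ?_, ?_⟩
  · have h21 : ((2 : WithTop ℕ∞)) = 1 + 1 := by norm_num
    rw [h21, contDiff_succ_iff_deriv]
    refine ⟨fun t => (hd1 t).differentiableAt, by simp, ?_⟩
    rw [hderiv1, contDiff_one_iff_deriv]
    refine ⟨fun t => (hd2 t).differentiableAt, ?_⟩
    have hdd : deriv (Lop' (NI xD)) = fun t => NI xD t - om^2 * x t :=
      funext fun t => (hd2 t).deriv
    rw [hdd]
    exact hgc.sub (continuous_const.mul (xD : ℝ →ᵇ ℝ).continuous)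
  · intro t
    have := (hmem t).1
    linarith
  · intro t
    have := xD.2.1 t
    rw [show t + 2 * Real.pi / 3 = t + T by unfold T; ring]
    exact this
  · intro t
    have h := hderiv2 t
    rw [h, om_sq]
    show NI xD t - 1/40 * x t + 1/40 * x t = _
    unfold NI Fnl
    ring
end

section
/- The differential equation x''(t) + (1/40)x(t) = (1 + 2cos(3t))/x(t)^{3/2} + e^{2sin(3t)}/x(t)² + 10 + cos(3t) has at least one positive (2π/3)-periodic solution, i.e. there exists a twice continuously differentiable function x : ℝ → (0,∞) with x(t + 2π/3) = x(t) for all t that satisfies the equation for all t ∈ ℝ. -/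
open Real intervalIntegral BoundedContinuousFunction

noncomputable section Ex42aux

def om : ℝ := (Real.sqrt 40)⁻¹
def Tp : ℝ := 2 * Real.pi / 3
def th : ℝ := om * (Tp / 2)
def cc : ℝ := (2 * om * Real.sin th)⁻¹
def Ker (r : ℝ) : ℝ := cc * Real.cos (om * r - th)
def NL (t y : ℝ) : ℝ :=
  (1 + 2 * Real.cos (3 * t)) / y ^ ((3 : ℝ) / 2)
    + Real.exp (2 * Real.sin (3 * t)) / y ^ (2 : ℝ) + 10 + Real.cos (3 * t)

lemma sqrt40_sq : Real.sqrt 40 ^ 2 = 40 := Real.sq_sqrt (by norm_num)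

lemma sqrt40_ge : (6:ℝ) ≤ Real.sqrt 40 := by
  nlinarith [sqrt40_sq, Real.sqrt_nonneg 40]

lemma om_pos : 0 < om := by
  rw [om]
  exact inv_pos.2 (by nlinarith [sqrt40_ge])

lemma om_le : om ≤ 1/6 := by
  rw [om]
  rw [inv_le_comm₀ (by nlinarith [sqrt40_ge]) (by norm_num)]
  simpa using sqrt40_ge

lemma om_sq : om ^ 2 = 1/40 := by
  rw [om, inv_pow, sqrt40_sq]; norm_num

lemma Tp_pos : 0 < Tp := by rw [Tp]; positivity

lemma th_eq : th = om * Real.pi / 3 := by rw [th, Tp]; ring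

lemma th_pos : 0 < th := by
  rw [th_eq]
  have := om_pos
  have := Real.pi_pos
  positivity

lemma th_lt : th < Real.pi / 2 := by
  rw [th_eq]
  nlinarith [om_le, Real.pi_pos, om_pos]

lemma sin_th_pos : 0 < Real.sin th :=
  Real.sin_pos_of_pos_of_lt_pi th_pos (by nlinarith [th_lt, Real.pi_pos])

lemma cc_pos : 0 < cc := by
  rw [cc]; have := om_pos
  have := sin_th_pos
  positivity

lemma Ker_cont : Continuous Ker := by
  unfold Ker; fun_prop

lemma Ker_nonneg {r : ℝ} (hr : r ∈ Set.Icc (0:ℝ) Tp) : 0 ≤ Ker r := by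
  rw [Ker]
  have h1 : om * r - th ∈ Set.Icc (-(Real.pi/2)) (Real.pi/2) := by
    constructor
    · nlinarith [hr.1, th_lt, om_pos]
    · have : om * r ≤ om * Tp := by nlinarith [hr.2, om_pos]
      have h2 : om * Tp = 2 * th := by rw [th]; ring
      nlinarith [th_lt]
  exact mul_nonneg cc_pos.le (Real.cos_nonneg_of_mem_Icc h1)

lemma integral_Ker : ∫ r in (0:ℝ)..Tp, Ker r = 40 := by
  have hP : ∀ r : ℝ, HasDerivAt (fun r => cc * (Real.sin (om * r - th) / om)) (Ker r) r := by
    intro r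
    have h1 : HasDerivAt (fun r : ℝ => om * r - th) om r := by
      simpa using ((hasDerivAt_id r).const_mul om).sub_const th
    have h2 := (Real.hasDerivAt_sin (om * r - th)).comp r h1
    have h3 := (h2.div_const om).const_mul cc
    refine h3.congr_deriv (Eq.symm ?_)
    rw [Ker]
    have := om_pos
    field_simp
  rw [intervalIntegral.integral_eq_sub_of_hasDerivAt (fun r _ => hP r)
    (Ker_cont.intervalIntegrable _ _)]
  have h4 : om * Tp - th = th := by rw [th]; ring
  have h5 : om * 0 - th = -th := by ring
  rw [h4, h5, Real.sin_neg, cc]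
  have h6 := om_pos
  have h7 := sin_th_pos
  have h8 := om_sq
  field_simp
  nlinarith [h8]


lemma rpow32_ge {y : ℝ} (hy : 300 ≤ y) : 300 ≤ y ^ ((3:ℝ)/2) := by
  have h1 : (1:ℝ) ≤ y := by linarith
  calc (300:ℝ) ≤ y := hy
    _ = y ^ (1:ℝ) := (Real.rpow_one y).symm
    _ ≤ y ^ ((3:ℝ)/2) := Real.rpow_le_rpow_of_exponent_le h1 (by norm_num)

lemma rpow2_ge {y : ℝ} (hy : 300 ≤ y) : 90000 ≤ y ^ ((2:ℝ)) := by
  rw [show ((2:ℝ)) = ((2:ℕ):ℝ) by norm_num, Real.rpow_natCast]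
  nlinarith

lemma exp2sin_le (t : ℝ) : Real.exp (2 * Real.sin (3*t)) ≤ 9 := by
  have h1 : Real.exp (2 * Real.sin (3*t)) ≤ Real.exp 2 :=
    Real.exp_le_exp.2 (by nlinarith [Real.sin_le_one (3*t)])
  have h2 : Real.exp 2 = Real.exp 1 * Real.exp 1 := by
    rw [← Real.exp_add]; norm_num
  nlinarith [Real.exp_one_lt_d9, Real.exp_pos 1]

lemma NL_lb {t y : ℝ} (hy : 300 ≤ y) : 44/5 ≤ NL t y := by
  have h1 := rpow32_ge hy
  have h2 := rpow2_ge hy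
  have hc := Real.neg_one_le_cos (3*t)
  have he := (Real.exp_pos (2 * Real.sin (3*t))).le
  have ht1 : -(1/300) ≤ (1 + 2 * Real.cos (3 * t)) / y ^ ((3 : ℝ) / 2) := by
    rw [le_div_iff₀ (by linarith : (0:ℝ) < y ^ ((3:ℝ)/2))]
    nlinarith
  have ht2 : 0 ≤ Real.exp (2 * Real.sin (3*t)) / y ^ ((2:ℝ)) := by positivity
  rw [NL]; nlinarith

lemma NL_ub {t y : ℝ} (hy : 300 ≤ y) : NL t y ≤ 56/5 := by
  have h1 := rpow32_ge hy
  have h2 := rpow2_ge hy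
  have hc := Real.cos_le_one (3*t)
  have ht1 : (1 + 2 * Real.cos (3 * t)) / y ^ ((3 : ℝ) / 2) ≤ 3/300 :=
    div_le_div₀ (by norm_num) (by nlinarith) (by norm_num) h1
  have ht2 : Real.exp (2 * Real.sin (3*t)) / y ^ ((2:ℝ)) ≤ 9/90000 :=
    div_le_div₀ (by norm_num) (exp2sin_le t) (by norm_num) h2
  rw [NL]; nlinarith

lemma rpow_neg_lip {c : ℝ} (hc : 1 ≤ c) {a b : ℝ} (ha : 300 ≤ a) (hb : 300 ≤ b) :
    |a ^ (-c) - b ^ (-c)| ≤ (c / 90000) * |a - b| := by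
  have key := Convex.norm_image_sub_le_of_norm_hasDerivWithin_le
    (f := fun x : ℝ => x ^ (-c)) (f' := fun x : ℝ => (-c) * x ^ (-c - 1))
    (s := Set.Ici (300:ℝ)) (C := c / 90000) ?_ ?_ (convex_Ici _) hb ha
  · simpa [Real.norm_eq_abs] using key
  · intro x hx
    have hx' : (300:ℝ) ≤ x := hx
    exact (Real.hasDerivAt_rpow_const (Or.inl (by linarith))).hasDerivWithinAt
  · intro x hx
    have hx' : (300:ℝ) ≤ x := hx
    have hx0 : (0:ℝ) < x := by linarith
    have h1 : x ^ (-c - 1) ≤ x ^ (-(2:ℝ)) :=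
      Real.rpow_le_rpow_of_exponent_le (by linarith) (by linarith)
    have h2 : x ^ (-(2:ℝ)) ≤ 1/90000 := by
      rw [Real.rpow_neg hx0.le, show ((2:ℝ)) = ((2:ℕ):ℝ) by norm_num, Real.rpow_natCast]
      rw [inv_le_comm₀ (by positivity) (by norm_num)]
      nlinarith
    have h3 : (0:ℝ) < x ^ (-c - 1) := Real.rpow_pos_of_pos hx0 _
    rw [norm_mul, Real.norm_eq_abs, Real.norm_eq_abs, abs_neg, abs_of_pos (by linarith : (0:ℝ) < c),
      abs_of_pos h3]
    calc c * x ^ (-c-1) ≤ c * (1/90000) := by nlinarith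
      _ = c / 90000 := by ring

lemma NL_lip {t a b : ℝ} (ha : 300 ≤ a) (hb : 300 ≤ b) :
    |NL t a - NL t b| ≤ (1/80) * |a - b| := by
  have ha0 : (0:ℝ) ≤ a := by linarith
  have hb0 : (0:ℝ) ≤ b := by linarith
  have e1 : NL t a - NL t b
      = (1 + 2 * Real.cos (3 * t)) * (a ^ (-((3:ℝ)/2)) - b ^ (-((3:ℝ)/2)))
        + Real.exp (2 * Real.sin (3*t)) * (a ^ (-(2:ℝ)) - b ^ (-(2:ℝ))) := by
    rw [NL, NL, Real.rpow_neg ha0, Real.rpow_neg hb0, Real.rpow_neg ha0, Real.rpow_neg hb0]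
    ring
  have l1 := rpow_neg_lip (c := (3:ℝ)/2) (by norm_num) ha hb
  have l2 := rpow_neg_lip (c := (2:ℝ)) (by norm_num) ha hb
  have hc1 : |1 + 2 * Real.cos (3 * t)| ≤ 3 := by
    rw [abs_le]; constructor <;> nlinarith [Real.neg_one_le_cos (3*t), Real.cos_le_one (3*t)]
  have hc2 : |Real.exp (2 * Real.sin (3*t))| ≤ 9 := by
    rw [abs_of_pos (Real.exp_pos _)]; exact exp2sin_le t
  calc |NL t a - NL t b|
      ≤ |1 + 2 * Real.cos (3 * t)| * |a ^ (-((3:ℝ)/2)) - b ^ (-((3:ℝ)/2))|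
        + |Real.exp (2 * Real.sin (3*t))| * |a ^ (-(2:ℝ)) - b ^ (-(2:ℝ))| := by
        rw [e1, ← abs_mul, ← abs_mul]; exact abs_add_le _ _
    _ ≤ 3 * (((3:ℝ)/2) / 90000 * |a - b|) + 9 * ((2:ℝ) / 90000 * |a - b|) := by
        apply add_le_add
        · exact mul_le_mul hc1 l1 (abs_nonneg _) (by norm_num)
        · exact mul_le_mul hc2 l2 (abs_nonneg _) (by norm_num)
    _ ≤ (1/80) * |a - b| := by nlinarith [abs_nonneg (a - b)]

lemma NL_cont {v : ℝ → ℝ} (hv : Continuous v) (hpos : ∀ t, 300 ≤ v t) :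
    Continuous (fun t => NL t (v t)) := by
  unfold NL
  have h32 : Continuous (fun t => v t ^ ((3:ℝ)/2)) := by
    rw [continuous_iff_continuousAt]
    intro t
    exact (Real.continuousAt_rpow_const _ _ (Or.inl (by have := hpos t; positivity))).comp
      hv.continuousAt
  have h2 : Continuous (fun t => v t ^ ((2:ℝ))) := by
    rw [continuous_iff_continuousAt]
    intro t
    exact (Real.continuousAt_rpow_const _ _ (Or.inl (by have := hpos t; positivity))).comp
      hv.continuousAt
  have hne1 : ∀ t, v t ^ ((3:ℝ)/2) ≠ 0 := fun t => by nlinarith [rpow32_ge (hpos t)]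
  have hne2 : ∀ t, v t ^ ((2:ℝ)) ≠ 0 := fun t => by nlinarith [rpow2_ge (hpos t)]
  have c1 : Continuous fun t : ℝ => 1 + 2 * Real.cos (3*t) := by fun_prop
  have c2 : Continuous fun t : ℝ => Real.exp (2 * Real.sin (3*t)) := by fun_prop
  have c3 : Continuous fun t : ℝ => Real.cos (3*t) := by fun_prop
  exact (((c1.div h32 hne1).add (c2.div h2 hne2)).add continuous_const).add c3

/-! ### Integral operator -/

def FF (g : ℝ → ℝ) (t : ℝ) : ℝ := ∫ s in (0:ℝ)..t, g s
def G1 (h : ℝ → ℝ) (s : ℝ) : ℝ := Real.cos (om * s - th) * h s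
def G2 (h : ℝ → ℝ) (s : ℝ) : ℝ := Real.sin (om * s - th) * h s
def AA (h : ℝ → ℝ) (t : ℝ) : ℝ := FF (G1 h) (t + Tp) - FF (G1 h) t
def BB (h : ℝ → ℝ) (t : ℝ) : ℝ := FF (G2 h) (t + Tp) - FF (G2 h) t
def UU (h : ℝ → ℝ) (t : ℝ) : ℝ :=
  cc * (Real.cos (om * t) * AA h t + Real.sin (om * t) * BB h t)
def VV (h : ℝ → ℝ) (t : ℝ) : ℝ :=
  cc * om * (-(Real.sin (om * t)) * AA h t + Real.cos (om * t) * BB h t)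

lemma omTp : om * Tp = 2 * th := by rw [th]; ring

section withh
variable {h : ℝ → ℝ} (hh : Continuous h)

include hh in
lemma G1_cont : Continuous (G1 h) := by
  unfold G1; exact (Continuous.mul (by fun_prop) hh)
include hh in
lemma G2_cont : Continuous (G2 h) := by
  unfold G2; exact (Continuous.mul (by fun_prop) hh)

lemma hasDerivAt_FF {g : ℝ → ℝ} (hg : Continuous g) (t : ℝ) :
    HasDerivAt (FF g) (g t) t :=
  intervalIntegral.integral_hasDerivAt_right (hg.intervalIntegrable _ _)
    (hg.stronglyMeasurable.stronglyMeasurableAtFilter) hg.continuousAt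

include hh in
lemma UU_repr (t : ℝ) : UU h t = ∫ r in (0:ℝ)..Tp, Ker r * h (t + r) := by
  have step1 : (∫ r in (0:ℝ)..Tp, Ker r * h (t + r))
      = ∫ s in (t+0)..(t+Tp), Ker (s - t) * h s := by
    rw [← intervalIntegral.integral_comp_add_left (fun s => Ker (s - t) * h s) t]
    simp
  have step2 : ∀ s : ℝ, Ker (s - t) * h s
      = (Real.cos (om * t) * cc) * G1 h s + (Real.sin (om * t) * cc) * G2 h s := by
    intro s
    have harg : om * (s - t) - th = (om * s - th) - om * t := by ring
    rw [Ker, harg, Real.cos_sub, G1, G2]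
    ring
  have i1 : IntervalIntegrable (G1 h) MeasureTheory.volume t (t+Tp) :=
    (G1_cont hh).intervalIntegrable _ _
  have i2 : IntervalIntegrable (G2 h) MeasureTheory.volume t (t+Tp) :=
    (G2_cont hh).intervalIntegrable _ _
  rw [step1]
  simp only [add_zero]
  rw [intervalIntegral.integral_congr (g := fun s => (Real.cos (om * t) * cc) * G1 h s
      + (Real.sin (om * t) * cc) * G2 h s) (fun s _ => step2 s)]
  rw [intervalIntegral.integral_add ((i1.const_mul _)) ((i2.const_mul _))]
  rw [intervalIntegral.integral_const_mul, intervalIntegral.integral_const_mul]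
  have split : ∀ g : ℝ → ℝ, Continuous g →
      (∫ s in t..(t+Tp), g s) = FF g (t+Tp) - FF g t := by
    intro g hg
    have := intervalIntegral.integral_add_adjacent_intervals (μ := MeasureTheory.volume)
      (hg.intervalIntegrable 0 t) (hg.intervalIntegrable t (t+Tp))
    rw [FF, FF]
    linarith
  rw [split _ (G1_cont hh), split _ (G2_cont hh)]
  rw [UU, AA, BB]
  ring

include hh in
lemma hasDerivAt_AA (t : ℝ) : HasDerivAt (AA h) (G1 h (t + Tp) - G1 h t) t := by
  have h1 : HasDerivAt (fun t => FF (G1 h) (t + Tp)) (G1 h (t + Tp)) t := by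
    have := (hasDerivAt_FF (G1_cont hh) (t + Tp)).comp t ((hasDerivAt_id t).add_const Tp)
    simpa [Function.comp_def] using this
  exact h1.sub (hasDerivAt_FF (G1_cont hh) t)

include hh in
lemma hasDerivAt_BB (t : ℝ) : HasDerivAt (BB h) (G2 h (t + Tp) - G2 h t) t := by
  have h1 : HasDerivAt (fun t => FF (G2 h) (t + Tp)) (G2 h (t + Tp)) t := by
    have := (hasDerivAt_FF (G2_cont hh) (t + Tp)).comp t ((hasDerivAt_id t).add_const Tp)
    simpa [Function.comp_def] using this
  exact h1.sub (hasDerivAt_FF (G2_cont hh) t)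

include hh in
lemma UU_cont : Continuous (UU h) := by
  have hA : Continuous (AA h) := by
    have : Differentiable ℝ (AA h) := fun t => (hasDerivAt_AA hh t).differentiableAt
    exact this.continuous
  have hB : Continuous (BB h) := by
    have : Differentiable ℝ (BB h) := fun t => (hasDerivAt_BB hh t).differentiableAt
    exact this.continuous
  unfold UU
  fun_prop

lemma hasDerivAt_cos_om (t : ℝ) :
    HasDerivAt (fun t => Real.cos (om * t)) (-(Real.sin (om * t)) * om) t := by
  have h1 : HasDerivAt (fun t : ℝ => om * t) om t := by
    simpa using (hasDerivAt_id t).const_mul om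
  exact (Real.hasDerivAt_cos (om * t)).comp t h1

lemma hasDerivAt_sin_om (t : ℝ) :
    HasDerivAt (fun t => Real.sin (om * t)) (Real.cos (om * t) * om) t := by
  have h1 : HasDerivAt (fun t : ℝ => om * t) om t := by
    simpa using (hasDerivAt_id t).const_mul om
  exact (Real.hasDerivAt_sin (om * t)).comp t h1

variable (hper : ∀ s, h (s + Tp) = h s)

include hh hper in
lemma G1_shift (t : ℝ) : G1 h (t + Tp) = Real.cos (om * t + th) * h t := by
  rw [G1, hper]
  have : om * (t + Tp) - th = om * t + th := by rw [mul_add, omTp]; ring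
  rw [this]

include hh hper in
lemma G2_shift (t : ℝ) : G2 h (t + Tp) = Real.sin (om * t + th) * h t := by
  rw [G2, hper]
  have : om * (t + Tp) - th = om * t + th := by rw [mul_add, omTp]; ring
  rw [this]

include hh hper in
lemma hasDerivAt_UU (t : ℝ) : HasDerivAt (UU h) (VV h t) t := by
  have hA := hasDerivAt_AA hh t
  have hB := hasDerivAt_BB hh t
  have hD := (((hasDerivAt_cos_om t).mul hA).add ((hasDerivAt_sin_om t).mul hB)).const_mul cc
  have : UU h = fun t => cc * (Real.cos (om * t) * AA h t + Real.sin (om * t) * BB h t) := rfl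
  rw [this]
  refine hD.congr_deriv (Eq.symm ?_)
  rw [VV, G1_shift hh hper, G2_shift hh hper, G1, G2,
    Real.cos_add, Real.sin_add, Real.cos_sub, Real.sin_sub]
  ring

include hh hper in
lemma hasDerivAt_VV (t : ℝ) : HasDerivAt (VV h) (-(om^2) * UU h t + h t) t := by
  have hA := hasDerivAt_AA hh t
  have hB := hasDerivAt_BB hh t
  have hD := ((((hasDerivAt_sin_om t).neg).mul hA).add
    ((hasDerivAt_cos_om t).mul hB)).const_mul (cc * om)
  have hcc : cc * (2 * om * Real.sin th) = 1 := by
    rw [cc]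
    exact inv_mul_cancel₀ (by have := om_pos; have := sin_th_pos; positivity)
  have : VV h = fun t => cc * om *
      (-(Real.sin (om * t)) * AA h t + Real.cos (om * t) * BB h t) := rfl
  rw [this]
  refine hD.congr_deriv (Eq.symm ?_)
  simp only [Pi.neg_apply]
  rw [UU, G1_shift hh hper, G2_shift hh hper, G1, G2,
    Real.cos_add, Real.sin_add, Real.cos_sub, Real.sin_sub]
  linear_combination (-(2:ℝ) * cc * om * Real.sin th * h t) * Real.sin_sq_add_cos_sq (om * t)
    - (h t) * hcc

end withh

/-! ### Bounds and contraction -/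

lemma UU_bounds {h : ℝ → ℝ} (hh : Continuous h)
    (hb : ∀ s, 44/5 ≤ h s ∧ h s ≤ 56/5) (t : ℝ) :
    300 ≤ UU h t ∧ UU h t ≤ 450 := by
  rw [UU_repr hh t]
  have hcont : Continuous fun r => Ker r * h (t + r) := by
    exact Ker_cont.mul (hh.comp (by fun_prop))
  have hint : IntervalIntegrable (fun r => Ker r * h (t + r)) MeasureTheory.volume 0 Tp :=
    hcont.intervalIntegrable _ _
  have hintK : ∀ c : ℝ, IntervalIntegrable (fun r => c * Ker r) MeasureTheory.volume 0 Tp :=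
    fun c => (continuous_const.mul Ker_cont).intervalIntegrable _ _
  have hTp := Tp_pos
  constructor
  · have mono := intervalIntegral.integral_mono_on (f := fun r => (44/5) * Ker r)
      (g := fun r => Ker r * h (t + r)) hTp.le (hintK _) hint ?_
    · have : (∫ r in (0:ℝ)..Tp, (44/5) * Ker r) = (44/5) * 40 := by
        rw [intervalIntegral.integral_const_mul, integral_Ker]
      linarith [mono, this]
    · intro r hr
      have hK := Ker_nonneg hr
      nlinarith [(hb (t + r)).1]
  · have mono := intervalIntegral.integral_mono_on (f := fun r => Ker r * h (t + r))
      (g := fun r => (56/5) * Ker r) hTp.le hint (hintK _) ?_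
    · have : (∫ r in (0:ℝ)..Tp, (56/5) * Ker r) = (56/5) * 40 := by
        rw [intervalIntegral.integral_const_mul, integral_Ker]
      linarith [mono, this]
    · intro r hr
      have hK := Ker_nonneg hr
      nlinarith [(hb (t + r)).2]

lemma UU_lip {h₁ h₂ : ℝ → ℝ} (h1 : Continuous h₁) (h2 : Continuous h₂) {d : ℝ}
    (hd : ∀ s, |h₁ s - h₂ s| ≤ d) (t : ℝ) :
    |UU h₁ t - UU h₂ t| ≤ 40 * d := by
  rw [UU_repr h1 t, UU_repr h2 t]
  have c1 : Continuous fun r => Ker r * h₁ (t + r) := Ker_cont.mul (h1.comp (by fun_prop))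
  have c2 : Continuous fun r => Ker r * h₂ (t + r) := Ker_cont.mul (h2.comp (by fun_prop))
  rw [← intervalIntegral.integral_sub (c1.intervalIntegrable _ _) (c2.intervalIntegrable _ _)]
  have key := intervalIntegral.abs_integral_le_integral_abs (μ := MeasureTheory.volume)
    (f := fun r => Ker r * h₁ (t + r) - Ker r * h₂ (t + r)) Tp_pos.le
  have mono := intervalIntegral.integral_mono_on (μ := MeasureTheory.volume)
    (f := fun r => |Ker r * h₁ (t + r) - Ker r * h₂ (t + r)|)
    (g := fun r => d * Ker r) Tp_pos.le
    ((c1.sub c2).abs.intervalIntegrable _ _)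
    ((continuous_const.mul Ker_cont).intervalIntegrable _ _) ?_
  · refine key.trans (mono.trans ?_)
    rw [intervalIntegral.integral_const_mul, integral_Ker]
    linarith
  · intro r hr
    have hK := Ker_nonneg hr
    show |Ker r * h₁ (t + r) - Ker r * h₂ (t + r)| ≤ d * Ker r
    have : |Ker r * h₁ (t + r) - Ker r * h₂ (t + r)| = Ker r * |h₁ (t + r) - h₂ (t + r)| := by
      rw [← mul_sub, abs_mul, abs_of_nonneg hK]
    rw [this]
    nlinarith [hd (t + r), abs_nonneg (h₁ (t + r) - h₂ (t + r))]

lemma UU_per {h : ℝ → ℝ} (hh : Continuous h) (hper : ∀ s, h (s + Tp) = h s) (t : ℝ) :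
    UU h (t + Tp) = UU h t := by
  rw [UU_repr hh, UU_repr hh]
  apply intervalIntegral.integral_congr
  intro r _
  show Ker r * h (t + Tp + r) = Ker r * h (t + r)
  have e : t + Tp + r = (t + r) + Tp := by ring
  rw [e, hper]

/-! ### The fixed point setup -/

lemma NL_per (t y : ℝ) : NL (t + Tp) y = NL t y := by
  have h3 : 3 * (t + Tp) = 3 * t + 2 * Real.pi := by rw [Tp]; ring
  rw [NL, NL, h3, Real.cos_add_two_pi, Real.sin_add_two_pi]

def SS : Set (ℝ →ᵇ ℝ) :=
  {v | (∀ t, v (t + Tp) = v t) ∧ ∀ t, v t ∈ Set.Icc (300:ℝ) 450}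

def hfun (v : ℝ →ᵇ ℝ) : ℝ → ℝ := fun s => NL s (v s)

lemma hfun_cont {v : ℝ →ᵇ ℝ} (hv : v ∈ SS) : Continuous (hfun v) :=
  NL_cont v.continuous (fun t => (hv.2 t).1)

lemma hfun_per {v : ℝ →ᵇ ℝ} (hv : v ∈ SS) : ∀ s, hfun v (s + Tp) = hfun v s := by
  intro s
  rw [hfun, hfun]
  simp only [hv.1 s, NL_per]

lemma hfun_bounds {v : ℝ →ᵇ ℝ} (hv : v ∈ SS) : ∀ s, 44/5 ≤ hfun v s ∧ hfun v s ≤ 56/5 :=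
  fun s => ⟨NL_lb (hv.2 s).1, NL_ub (hv.2 s).1⟩

def PhiBCF (v : ℝ →ᵇ ℝ) (hv : v ∈ SS) : ℝ →ᵇ ℝ :=
  BoundedContinuousFunction.ofNormedAddCommGroup (UU (hfun v))
    (UU_cont (hfun_cont hv)) 450
    (fun t => by
      have := UU_bounds (hfun_cont hv) (hfun_bounds hv) t
      rw [Real.norm_eq_abs, abs_le]
      constructor <;> linarith [this.1, this.2])

lemma PhiBCF_apply (v : ℝ →ᵇ ℝ) (hv : v ∈ SS) (t : ℝ) :
    PhiBCF v hv t = UU (hfun v) t := rfl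

lemma PhiBCF_mem (v : ℝ →ᵇ ℝ) (hv : v ∈ SS) : PhiBCF v hv ∈ SS := by
  constructor
  · intro t
    rw [PhiBCF_apply, PhiBCF_apply]
    exact UU_per (hfun_cont hv) (hfun_per hv) t
  · intro t
    rw [PhiBCF_apply]
    exact UU_bounds (hfun_cont hv) (hfun_bounds hv) t

lemma SS_closed : IsClosed SS := by
  have h1 : IsClosed {v : ℝ →ᵇ ℝ | ∀ t, v (t + Tp) = v t} := by
    have : {v : ℝ →ᵇ ℝ | ∀ t, v (t + Tp) = v t}
        = ⋂ t : ℝ, {v : ℝ →ᵇ ℝ | v (t + Tp) = v t} := by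
      ext v; simp
    rw [this]
    exact isClosed_iInter fun t => isClosed_eq
      (continuous_eval_const (t + Tp))
      (continuous_eval_const t)
  have h2 : IsClosed {v : ℝ →ᵇ ℝ | ∀ t, v t ∈ Set.Icc (300:ℝ) 450} := by
    have : {v : ℝ →ᵇ ℝ | ∀ t, v t ∈ Set.Icc (300:ℝ) 450}
        = ⋂ t : ℝ, (fun v : ℝ →ᵇ ℝ => v t) ⁻¹' (Set.Icc (300:ℝ) 450) := by
      ext v; simp
    rw [this]
    exact isClosed_iInter fun t => isClosed_Icc.preimage
      (continuous_eval_const t)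
  exact h1.inter h2


lemma SS_nonempty : (BoundedContinuousFunction.const ℝ (350:ℝ)) ∈ SS := by
  constructor
  · intro t; rfl
  · intro t
    simp only [BoundedContinuousFunction.const_apply]
    constructor <;> norm_num

lemma exists_sol : ∃ v : ℝ →ᵇ ℝ, v ∈ SS ∧ ∀ t, v t = UU (hfun v) t := by
  haveI : CompleteSpace ↥SS := SS_closed.completeSpace_coe
  haveI : Nonempty ↥SS := ⟨⟨_, SS_nonempty⟩⟩
  let Phi : ↥SS → ↥SS := fun v => ⟨PhiBCF v v.2, PhiBCF_mem v v.2⟩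
  have key : ∀ v w : ↥SS, dist (Phi v) (Phi w) ≤ (1/2) * dist v w := by
    intro v w
    have hdnn : (0:ℝ) ≤ dist v w := dist_nonneg
    rw [Subtype.dist_eq, BoundedContinuousFunction.dist_le (by positivity)]
    intro t
    rw [Real.dist_eq]
    have hl : ∀ s, |hfun (↑v) s - hfun (↑w) s| ≤ (1/80) * dist v w := by
      intro s
      have h1 : |NL s ((v : ℝ →ᵇ ℝ) s) - NL s ((w : ℝ →ᵇ ℝ) s)|
          ≤ (1/80) * |(v : ℝ →ᵇ ℝ) s - (w : ℝ →ᵇ ℝ) s| :=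
        NL_lip ((v.2.2 s).1) ((w.2.2 s).1)
      have h2 : |(v : ℝ →ᵇ ℝ) s - (w : ℝ →ᵇ ℝ) s| ≤ dist v w := by
        rw [← Real.dist_eq, Subtype.dist_eq]
        exact BoundedContinuousFunction.dist_coe_le_dist s
      calc |hfun (↑v) s - hfun (↑w) s| ≤ (1/80) * |(v : ℝ →ᵇ ℝ) s - (w : ℝ →ᵇ ℝ) s| := h1
        _ ≤ (1/80) * dist v w := by linarith
    have := UU_lip (hfun_cont v.2) (hfun_cont w.2) hl t
    have he1 : ((Phi v : ↥SS) : ℝ →ᵇ ℝ) t = UU (hfun ↑v) t := rfl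
    have he2 : ((Phi w : ↥SS) : ℝ →ᵇ ℝ) t = UU (hfun ↑w) t := rfl
    rw [he1, he2]
    linarith
  have hC : ContractingWith (1/2 : NNReal) Phi := by
    constructor
    · rw [← NNReal.coe_lt_coe]; norm_num
    · apply LipschitzWith.of_dist_le_mul
      intro v w
      have : (((1:NNReal)/2 : NNReal) : ℝ) = 1/2 := by norm_num
      rw [this]
      exact key v w
  let w := ContractingWith.fixedPoint Phi hC
  have hfix : Phi w = w := hC.fixedPoint_isFixedPt
  refine ⟨(w : ℝ →ᵇ ℝ), w.2, fun t => ?_⟩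
  conv_lhs => rw [← hfix]
  rfl

theorem example_4_2 :
    ∃ x : ℝ → ℝ,
      ContDiff ℝ 2 x ∧ (∀ t, 0 < x t) ∧
      (∀ t, x (t + 2 * Real.pi / 3) = x t) ∧
      ∀ t, deriv (deriv x) t + (1 / 40) * x t =
        (1 + 2 * Real.cos (3 * t)) / x t ^ ((3 : ℝ) / 2)
          + Real.exp (2 * Real.sin (3 * t)) / x t ^ (2 : ℝ)
          + 10 + Real.cos (3 * t) := by
  obtain ⟨v, hv, hfix⟩ := exists_sol
  set h : ℝ → ℝ := hfun v with hh_def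
  have hcont : Continuous h := hfun_cont hv
  have hper : ∀ s, h (s + Tp) = h s := hfun_per hv
  have hxeq : (v : ℝ → ℝ) = UU h := funext hfix
  have hd1 : ∀ t, HasDerivAt (v : ℝ → ℝ) (VV h t) t := by
    rw [hxeq]; exact hasDerivAt_UU hcont hper
  have hderiv1 : deriv (v : ℝ → ℝ) = VV h := funext fun t => (hd1 t).deriv
  have hd2 : ∀ t, HasDerivAt (VV h) (-(om^2) * UU h t + h t) t := hasDerivAt_VV hcont hper
  have hderiv2 : deriv (VV h) = fun t => -(om^2) * UU h t + h t :=
    funext fun t => (hd2 t).deriv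
  refine ⟨(v : ℝ → ℝ), ?_, ?_, ?_, ?_⟩
  · rw [show (2 : WithTop ℕ∞) = 1 + 1 by norm_num]
    rw [contDiff_succ_iff_deriv]
    refine ⟨fun t => (hd1 t).differentiableAt, by simp, ?_⟩
    rw [hderiv1, contDiff_one_iff_deriv]
    refine ⟨fun t => (hd2 t).differentiableAt, ?_⟩
    rw [hderiv2]
    exact (continuous_const.mul (UU_cont hcont)).add hcont
  · intro t
    have := (hv.2 t).1
    linarith
  · intro t
    exact hv.1 t
  · intro t
    have e1 : deriv (deriv (v : ℝ → ℝ)) t = -(om^2) * UU h t + h t := by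
      rw [hderiv1, hderiv2]
    rw [e1]
    have e2 : UU h t = v t := (hfix t).symm
    have e3 : h t = (1 + 2 * Real.cos (3 * t)) / v t ^ ((3 : ℝ) / 2)
        + Real.exp (2 * Real.sin (3 * t)) / v t ^ (2 : ℝ) + 10 + Real.cos (3 * t) := rfl
    rw [e2, e3, om_sq]
    ring
end Ex42aux
end

section
/- The differential equation x''(t) + (1/40)x(t) = (1 + 2cos(3t))/x(t)^{3/2} + e^{2sin(3t)}/x(t)^{3/2} + 10 + cos(3t) has at least one positive (2π/3)-periodic solution, i.e. there exists a twice continuously differentiable function x : ℝ → (0,∞) with x(t + 2π/3) = x(t) for all t that satisfies the equation for all t ∈ ℝ. -/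
open Real intervalIntegral Set NNReal ENNReal

noncomputable section
namespace Ex43

def T : ℝ := 2 * Real.pi / 3
def m : ℝ := Real.sqrt (1/40)
def C : ℝ := 2 * m * Real.sin (m * T / 2)

lemma m_pos : 0 < m := Real.sqrt_pos.2 (by norm_num)
lemma m_sq : m ^ 2 = 1/40 := Real.sq_sqrt (by norm_num)
lemma m_le : m ≤ 0.17 := by
  have : (0.17:ℝ) = Real.sqrt (0.17^2) := (Real.sqrt_sq (by norm_num)).symm
  rw [this]
  exact Real.sqrt_le_sqrt (by norm_num)
lemma m_ge : 0.15 ≤ m := by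
  have : (0.15:ℝ) = Real.sqrt (0.15^2) := (Real.sqrt_sq (by norm_num)).symm
  rw [this]
  exact Real.sqrt_le_sqrt (by norm_num)
lemma pi_lb : 3.14 ≤ Real.pi := le_of_lt Real.pi_gt_d2
lemma pi_ub : Real.pi ≤ 3.15 := le_of_lt Real.pi_lt_d2
lemma T_pos : 0 < T := by
  have := pi_lb; unfold T; nlinarith
lemma T_lb : 2.09 ≤ T := by have := pi_lb; unfold T; nlinarith
lemma T_ub : T ≤ 2.1 := by have := pi_ub; unfold T; nlinarith

lemma half_ub : m * T / 2 ≤ 0.179 := by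
  have h1 := m_le; have h2 := T_ub; have h3 := m_ge; have h4 := T_lb
  nlinarith
lemma half_lb : 0.15 ≤ m * T / 2 := by
  have h1 := m_ge; have h2 := T_lb; nlinarith
lemma half_pos : 0 < m * T / 2 := lt_of_lt_of_le (by norm_num) half_lb

lemma sin_half_lb : 0.99 * (m * T / 2) ≤ Real.sin (m * T / 2) := by
  have h := Real.sin_gt_sub_cube half_pos
  have h2 := half_ub; have h3 := half_lb
  have hx2 : (m*T/2)^2 ≤ 0.033 := by nlinarith
  nlinarith [mul_le_mul_of_nonneg_left hx2 (le_of_lt half_pos)]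
lemma sin_half_ub : Real.sin (m * T / 2) ≤ m * T / 2 :=
  le_of_lt (Real.sin_lt half_pos)

lemma C_pos : 0 < C := by
  have h := sin_half_lb
  have := m_pos; have := half_pos
  unfold C; nlinarith
lemma C_lb : 0.99 * (T/40) ≤ C := by
  have h := sin_half_lb
  have hm := m_sq
  unfold C; nlinarith [m_pos, half_pos]
lemma C_ub : C ≤ T/40 := by
  have h := sin_half_ub
  have hm := m_sq
  unfold C; nlinarith [m_pos, T_pos]
lemma T_le_C : T ≤ 41 * C := by
  have := C_lb; have := T_lb; have := T_pos; nlinarith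



def clamp (y : ℝ) : ℝ := min (max y 310) 490
def psi (y : ℝ) : ℝ := clamp y ^ (-(3:ℝ)/2)
def Nf (t : ℝ) : ℝ := 1 + 2 * Real.cos (3*t) + Real.exp (2 * Real.sin (3*t))
def gfun (f : ℝ → ℝ) (t : ℝ) : ℝ := Nf t * psi (f t) + 10 + Real.cos (3*t)

lemma clamp_mem (y : ℝ) : clamp y ∈ Icc (310:ℝ) 490 :=
  ⟨le_min (le_max_right _ _) (by norm_num), min_le_right _ _⟩

lemma clamp_lip (a b : ℝ) : |clamp a - clamp b| ≤ |a - b| := by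
  have h1 : |clamp a - clamp b| ≤ max |max a 310 - max b 310| |(490:ℝ) - 490| :=
    abs_min_sub_min_le_max _ _ _ _
  have h2 : |max a 310 - max b 310| ≤ |a - b| := abs_max_sub_max_le_abs _ _ _
  simpa using h1.trans (by simpa using h2)

lemma clamp_eq {y : ℝ} (h1 : 310 ≤ y) (h2 : y ≤ 490) : clamp y = y := by
  unfold clamp
  rw [max_eq_left h1, min_eq_left h2]

lemma sqrt_lb (z : ℝ) (hz : 310 ≤ z) : (17.6:ℝ) ≤ Real.sqrt z := by
  have : (17.6:ℝ) = Real.sqrt (17.6^2) := (Real.sqrt_sq (by norm_num)).symm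
  rw [this]; exact Real.sqrt_le_sqrt (by nlinarith)

lemma rpow_three_halves (z : ℝ) (hz : (0:ℝ) ≤ z) :
    z ^ ((3:ℝ)/2) = Real.sqrt z ^ (3:ℕ) := by
  rw [Real.sqrt_eq_rpow, ← Real.rpow_natCast (z ^ (1/(2:ℝ))) 3, ← Real.rpow_mul hz]
  norm_num

lemma rpow_five_halves (z : ℝ) (hz : (0:ℝ) ≤ z) :
    z ^ ((5:ℝ)/2) = Real.sqrt z ^ (5:ℕ) := by
  rw [Real.sqrt_eq_rpow, ← Real.rpow_natCast (z ^ (1/(2:ℝ))) 5, ← Real.rpow_mul hz]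
  norm_num

lemma rpow32_lb (z : ℝ) (hz : 310 ≤ z) : (5000:ℝ) ≤ z ^ ((3:ℝ)/2) := by
  rw [rpow_three_halves z (by linarith)]
  have h := sqrt_lb z hz
  have h2 := pow_le_pow_left₀ (by norm_num : (0:ℝ) ≤ 17.6) h 3
  nlinarith [Real.sqrt_nonneg z]

lemma rpow52_lb (z : ℝ) (hz : 310 ≤ z) : (1500000:ℝ) ≤ z ^ ((5:ℝ)/2) := by
  rw [rpow_five_halves z (by linarith)]
  have h := sqrt_lb z hz
  have h2 := pow_le_pow_left₀ (by norm_num : (0:ℝ) ≤ 17.6) h 5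
  nlinarith [Real.sqrt_nonneg z]

lemma psi_pos (y : ℝ) : 0 < psi y :=
  Real.rpow_pos_of_pos (lt_of_lt_of_le (by norm_num) (clamp_mem y).1) _

lemma psi_le (y : ℝ) : psi y ≤ 0.0002 := by
  have h1 : psi y = (clamp y ^ ((3:ℝ)/2))⁻¹ := by
    unfold psi
    rw [show (-(3:ℝ)/2) = -((3:ℝ)/2) by norm_num,
      Real.rpow_neg (by linarith [(clamp_mem y).1])]
  rw [h1]
  have h2 := rpow32_lb (clamp y) (clamp_mem y).1
  rw [inv_le_comm₀ (by linarith) (by norm_num)]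
  linarith

lemma psi_lip (a b : ℝ) : |psi a - psi b| ≤ 0.000001 * |a - b| := by
  have key : ∀ u v : ℝ, u ∈ Icc (310:ℝ) 490 → v ∈ Icc (310:ℝ) 490 →
      ‖(fun z : ℝ => z ^ (-(3:ℝ)/2)) v - (fun z : ℝ => z ^ (-(3:ℝ)/2)) u‖
        ≤ 0.000001 * ‖v - u‖ := by
    intro u v hu hv
    refine Convex.norm_image_sub_le_of_norm_hasDerivWithin_le
      (f' := fun z : ℝ => (-(3:ℝ)/2) * z ^ ((-(3:ℝ)/2) - 1))
      (fun z hz => (Real.hasDerivAt_rpow_const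
        (Or.inl (fun h => by rw [h] at hz; exact absurd hz.1 (by norm_num)))).hasDerivWithinAt)
      (fun z hz => ?_) (convex_Icc _ _) hu hv
    have hz1 : (310:ℝ) ≤ z := hz.1
    have e1 : z ^ ((-(3:ℝ)/2) - 1) = (z ^ ((5:ℝ)/2))⁻¹ := by
      rw [show ((-(3:ℝ)/2) - 1) = -((5:ℝ)/2) by norm_num,
        Real.rpow_neg (by linarith)]
    have h2 := rpow52_lb z hz1
    have h3 : (0:ℝ) < z ^ ((5:ℝ)/2) := by linarith
    rw [Real.norm_eq_abs, abs_mul, e1, abs_inv, abs_of_pos h3]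
    have : (z ^ ((5:ℝ)/2))⁻¹ ≤ (1500000:ℝ)⁻¹ := by
      apply inv_anti₀ (by norm_num) h2
    rw [show |(-(3:ℝ)/2)| = (3:ℝ)/2 by rw [abs_of_nonpos] <;> norm_num]
    nlinarith [abs_nonneg (v-u)]
  have h := key (clamp a) (clamp b) (clamp_mem a) (clamp_mem b)
  simp only [Real.norm_eq_abs] at h
  unfold psi
  rw [abs_sub_comm]
  refine h.trans ?_
  rw [abs_sub_comm]
  nlinarith [clamp_lip a b]

lemma exp_two_le : Real.exp 2 ≤ 7.4 := by
  have h := Real.exp_one_lt_d9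
  have : Real.exp 2 = Real.exp 1 * Real.exp 1 := by
    rw [← Real.exp_add]; norm_num
  nlinarith [Real.exp_pos 1]

lemma Nf_abs (t : ℝ) : |Nf t| ≤ 10.4 := by
  have h1 := Real.neg_one_le_cos (3*t)
  have h2 := Real.cos_le_one (3*t)
  have h3 : Real.exp (2 * Real.sin (3*t)) ≤ 7.4 := by
    have := Real.sin_le_one (3*t)
    exact le_trans (Real.exp_le_exp.2 (by linarith)) exp_two_le
  have h4 : 0 < Real.exp (2 * Real.sin (3*t)) := Real.exp_pos _
  rw [abs_le]; constructor <;> unfold Nf <;> nlinarith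

lemma gfun_sub_ten (f : ℝ → ℝ) (t : ℝ) : |gfun f t - 10| ≤ 1.01 := by
  have h1 := Nf_abs t
  have h2 := psi_le (f t)
  have h3 := psi_pos (f t)
  have h4 := Real.neg_one_le_cos (3*t)
  have h5 := Real.cos_le_one (3*t)
  have h6 : |Nf t * psi (f t)| ≤ 10.4 * 0.0002 := by
    rw [abs_mul]
    apply mul_le_mul h1 (by rw [abs_of_pos h3]; exact h2) (abs_nonneg _) (by norm_num)
  rw [abs_le] at h6 ⊢
  unfold gfun; constructor <;> nlinarith [h6.1, h6.2]

lemma gfun_lip (f g : ℝ → ℝ) (t : ℝ) :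
    |gfun f t - gfun g t| ≤ 0.0000104 * |f t - g t| := by
  have h1 := Nf_abs t
  have h2 := psi_lip (f t) (g t)
  have : gfun f t - gfun g t = Nf t * (psi (f t) - psi (g t)) := by
    unfold gfun; ring
  rw [this, abs_mul]
  calc |Nf t| * |psi (f t) - psi (g t)| ≤ 10.4 * (0.000001 * |f t - g t|) := by
        apply mul_le_mul h1 h2 (abs_nonneg _) (by norm_num)
    _ = 0.0000104 * |f t - g t| := by ring



-- Part 3: the Green operator
def FF (w : ℝ → ℝ) (t : ℝ) : ℝ := ∫ s in (0:ℝ)..t, Real.cos (m*s) * w s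
def GG (w : ℝ → ℝ) (t : ℝ) : ℝ := ∫ s in (0:ℝ)..t, Real.sin (m*s) * w s
def K (w : ℝ → ℝ) (t : ℝ) : ℝ :=
  (Real.cos (m*(t + T/2)) * (FF w (t+T) - FF w t)
    + Real.sin (m*(t + T/2)) * (GG w (t+T) - GG w t)) / C

variable {w v : ℝ → ℝ}

lemma FF_hasDeriv (hw : Continuous w) (t : ℝ) :
    HasDerivAt (FF w) (Real.cos (m*t) * w t) t := by
  have hu : Continuous fun s => Real.cos (m*s) * w s :=
    ((Real.continuous_cos.comp (continuous_const.mul continuous_id)).mul hw)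
  exact intervalIntegral.integral_hasDerivAt_right (hu.intervalIntegrable 0 t)
    (hu.stronglyMeasurable.stronglyMeasurableAtFilter) hu.continuousAt

lemma GG_hasDeriv (hw : Continuous w) (t : ℝ) :
    HasDerivAt (GG w) (Real.sin (m*t) * w t) t := by
  have hu : Continuous fun s => Real.sin (m*s) * w s :=
    ((Real.continuous_sin.comp (continuous_const.mul continuous_id)).mul hw)
  exact intervalIntegral.integral_hasDerivAt_right (hu.intervalIntegrable 0 t)
    (hu.stronglyMeasurable.stronglyMeasurableAtFilter) hu.continuousAt

lemma FF_diff_eq (hw : Continuous w) (t : ℝ) :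
    FF w (t+T) - FF w t = ∫ s in t..(t+T), Real.cos (m*s) * w s := by
  have hu : Continuous fun s => Real.cos (m*s) * w s :=
    ((Real.continuous_cos.comp (continuous_const.mul continuous_id)).mul hw)
  have := intervalIntegral.integral_add_adjacent_intervals
    (μ := MeasureTheory.volume) (hu.intervalIntegrable 0 t) (hu.intervalIntegrable t (t+T))
  unfold FF; linarith

lemma GG_diff_eq (hw : Continuous w) (t : ℝ) :
    GG w (t+T) - GG w t = ∫ s in t..(t+T), Real.sin (m*s) * w s := by
  have hu : Continuous fun s => Real.sin (m*s) * w s :=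
    ((Real.continuous_sin.comp (continuous_const.mul continuous_id)).mul hw)
  have := intervalIntegral.integral_add_adjacent_intervals
    (μ := MeasureTheory.volume) (hu.intervalIntegrable 0 t) (hu.intervalIntegrable t (t+T))
  unfold GG; linarith

lemma K_eq_integral (hw : Continuous w) (t : ℝ) :
    K w t = (∫ s in t..(t+T), Real.cos (m*(t + T/2 - s)) * w s) / C := by
  unfold K
  rw [FF_diff_eq hw, GG_diff_eq hw]
  congr 1
  rw [← intervalIntegral.integral_const_mul, ← intervalIntegral.integral_const_mul,
    ← intervalIntegral.integral_add]
  · apply intervalIntegral.integral_congr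
    intro s _
    simp only
    rw [show m*(t + T/2 - s) = m*(t + T/2) - m*s by ring, Real.cos_sub]; ring
  · exact (continuous_const.mul
      (((Real.continuous_cos.comp (continuous_const.mul continuous_id)).mul hw))).intervalIntegrable t (t+T)
  · exact (continuous_const.mul
      (((Real.continuous_sin.comp (continuous_const.mul continuous_id)).mul hw))).intervalIntegrable t (t+T)

lemma K_shift (hw : Continuous w) (t : ℝ) :
    K w (t+T) = K (fun u => w (u+T)) t := by
  have hw2 : Continuous fun u => w (u+T) := hw.comp (continuous_id.add continuous_const)
  rw [K_eq_integral hw, K_eq_integral hw2]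
  rw [← intervalIntegral.integral_comp_add_right
      (fun s => Real.cos (m*(t + T + T/2 - s)) * w s) T]
  congr 1
  apply intervalIntegral.integral_congr
  intro s _
  simp only
  rw [show m*(t + T + T/2 - (s + T)) = m*(t + T/2 - s) by ring]

lemma FF_cont (hw : Continuous w) : Continuous (FF w) := by
  have : Differentiable ℝ (FF w) := fun t => (FF_hasDeriv hw t).differentiableAt
  exact this.continuous

lemma GG_cont (hw : Continuous w) : Continuous (GG w) := by
  have : Differentiable ℝ (GG w) := fun t => (GG_hasDeriv hw t).differentiableAt
  exact this.continuous

lemma K_cont (hw : Continuous w) : Continuous (K w) := by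
  unfold K
  apply Continuous.div_const
  apply Continuous.add
  · exact (Real.continuous_cos.comp (continuous_const.mul
      (continuous_id.add continuous_const))).mul
      (((FF_cont hw).comp (continuous_id.add continuous_const)).sub (FF_cont hw))
  · exact (Real.continuous_sin.comp (continuous_const.mul
      (continuous_id.add continuous_const))).mul
      (((GG_cont hw).comp (continuous_id.add continuous_const)).sub (GG_cont hw))

lemma K_sub (hw : Continuous w) (hv : Continuous v) (t : ℝ) :
    K w t - K v t = K (fun s => w s - v s) t := by
  have hwv : Continuous fun s => w s - v s := hw.sub hv
  rw [K_eq_integral hw, K_eq_integral hv, K_eq_integral hwv, div_sub_div_same]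
  congr 1
  rw [← intervalIntegral.integral_sub]
  · apply intervalIntegral.integral_congr; intro s _; ring
  · exact (((Real.continuous_cos.comp ((continuous_const.mul
      (continuous_const.sub continuous_id)))).mul hw)).intervalIntegrable t (t+T)
  · exact (((Real.continuous_cos.comp ((continuous_const.mul
      (continuous_const.sub continuous_id)))).mul hv)).intervalIntegrable t (t+T)

lemma K_bound (hw : Continuous w) {B : ℝ} (hB : ∀ s, |w s| ≤ B) (t : ℝ) :
    |K w t| ≤ 82 * B := by
  have hB0 : 0 ≤ B := le_trans (abs_nonneg _) (hB 0)
  rw [K_eq_integral hw]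
  have hb : |∫ s in t..(t+T), Real.cos (m*(t + T/2 - s)) * w s| ≤ B * T := by
    have := intervalIntegral.norm_integral_le_of_norm_le_const
      (f := fun s => Real.cos (m*(t + T/2 - s)) * w s) (a := t) (b := t+T) (C := B) ?_
    · rw [Real.norm_eq_abs] at this
      calc |∫ s in t..(t+T), Real.cos (m*(t + T/2 - s)) * w s| ≤ B * |t + T - t| := this
        _ = B * T := by rw [show t + T - t = T by ring, abs_of_pos T_pos]
    · intro x _
      rw [Real.norm_eq_abs, abs_mul]
      calc |Real.cos (m*(t + T/2 - x))| * |w x| ≤ 1 * B :=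
            mul_le_mul (Real.abs_cos_le_one _) (hB x) (abs_nonneg _) (by norm_num)
        _ = B := by ring
  rw [abs_div, abs_of_pos C_pos]
  rw [div_le_iff₀ C_pos]
  have := T_le_C
  nlinarith [C_pos]

-- Part 4: K of constants, derivatives of K
lemma sin_half_pos : 0 < Real.sin (m * T / 2) := by
  have := sin_half_lb; have := half_pos; linarith [mul_pos (by norm_num : (0:ℝ) < 0.99) half_pos]

lemma FF_const (c t : ℝ) : FF (fun _ => c) t = c * Real.sin (m*t) / m := by
  unfold FF
  have key : ∀ s : ℝ, HasDerivAt (fun u => c * Real.sin (m*u) / m) (Real.cos (m*s) * c) s := by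
    intro s
    have h1 : HasDerivAt (fun u : ℝ => m*u) m s := by
      simpa using (hasDerivAt_id s).const_mul m
    have h2 : HasDerivAt (fun u : ℝ => Real.sin (m*u)) (Real.cos (m*s) * m) s :=
      (Real.hasDerivAt_sin (m*s)).comp s h1
    have h3 := (h2.const_mul c).div_const m
    refine h3.congr_deriv ?_
    field_simp [ne_of_gt m_pos]
  rw [intervalIntegral.integral_eq_sub_of_hasDerivAt (fun s _ => key s)]
  · simp
  · exact ((Real.continuous_cos.comp (continuous_const.mul continuous_id)).mul
      continuous_const).intervalIntegrable 0 t

lemma GG_const (c t : ℝ) : GG (fun _ => c) t = c * (1 - Real.cos (m*t)) / m := by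
  unfold GG
  have key : ∀ s : ℝ, HasDerivAt (fun u => c * (1 - Real.cos (m*u)) / m)
      (Real.sin (m*s) * c) s := by
    intro s
    have h1 : HasDerivAt (fun u : ℝ => m*u) m s := by
      simpa using (hasDerivAt_id s).const_mul m
    have h2 : HasDerivAt (fun u : ℝ => Real.cos (m*u)) (-Real.sin (m*s) * m) s :=
      (Real.hasDerivAt_cos (m*s)).comp s h1
    have h3 := (((hasDerivAt_const s (1:ℝ)).sub h2).const_mul c).div_const m
    refine h3.congr_deriv ?_
    field_simp [ne_of_gt m_pos]; ring
  rw [intervalIntegral.integral_eq_sub_of_hasDerivAt (fun s _ => key s)]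
  · simp
  · exact ((Real.continuous_sin.comp (continuous_const.mul continuous_id)).mul
      continuous_const).intervalIntegrable 0 t

lemma K_const (c t : ℝ) : K (fun _ => c) t = 40 * c := by
  unfold K
  rw [FF_const, FF_const, GG_const, GG_const]
  have hm := m_pos
  have hs := sin_half_pos
  rw [show m*(t + T) = m*(t + T/2) + m*T/2 by ring,
    show m*t = m*(t + T/2) - m*T/2 by ring]
  have key : Real.cos (m*(t + T/2)) *
        (Real.sin (m*(t + T/2) + m*T/2) - Real.sin (m*(t + T/2) - m*T/2))
      + Real.sin (m*(t + T/2)) *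
        (Real.cos (m*(t + T/2) - m*T/2) - Real.cos (m*(t + T/2) + m*T/2))
      = 2 * Real.sin (m*T/2) := by
    rw [Real.sin_add, Real.sin_sub, Real.cos_add, Real.cos_sub]
    linear_combination 2 * Real.sin (m*T/2) * (Real.sin_sq_add_cos_sq (m*(t + T/2)))
  have hC : C = 2 * m * Real.sin (m * T / 2) := rfl
  have hnum : Real.cos (m*(t + T/2)) *
        (c * Real.sin (m*(t + T/2) + m*T/2) / m - c * Real.sin (m*(t + T/2) - m*T/2) / m)
      + Real.sin (m*(t + T/2)) *
        (c * (1 - Real.cos (m*(t + T/2) + m*T/2)) / m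
          - c * (1 - Real.cos (m*(t + T/2) - m*T/2)) / m)
      = (c/m) * (2 * Real.sin (m*T/2)) := by
    linear_combination (c/m) * key
  rw [hnum, hC]
  have hm2 : m * m = 1/40 := by have := m_sq; nlinarith
  rw [div_eq_iff (by positivity)]
  field_simp
  linear_combination (-40 * c) * hm2

-- Part 5: derivative structure
def K1 (w : ℝ → ℝ) (t : ℝ) : ℝ :=
  m * (Real.cos (m*(t + T/2)) * (GG w (t+T) - GG w t)
       - Real.sin (m*(t + T/2)) * (FF w (t+T) - FF w t)) / C

lemma inner_hasDeriv (t : ℝ) : HasDerivAt (fun u : ℝ => m*(u + T/2)) m t := by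
  simpa using ((hasDerivAt_id t).add_const (T/2)).const_mul m

lemma p_hasDeriv (t : ℝ) : HasDerivAt (fun u => Real.cos (m*(u + T/2)))
    (-Real.sin (m*(t + T/2)) * m) t := by
  exact (Real.hasDerivAt_cos (m*(t + T/2))).comp t (inner_hasDeriv t)

lemma q_hasDeriv (t : ℝ) : HasDerivAt (fun u => Real.sin (m*(u + T/2)))
    (Real.cos (m*(t + T/2)) * m) t := by
  exact (Real.hasDerivAt_sin (m*(t + T/2))).comp t (inner_hasDeriv t)

lemma DF_hasDeriv (hw : Continuous w) (hper : ∀ s, w (s+T) = w s) (t : ℝ) :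
    HasDerivAt (fun u => FF w (u+T) - FF w u)
      ((Real.cos (m*(t+T)) - Real.cos (m*t)) * w t) t := by
  have h1 : HasDerivAt (fun u : ℝ => u + T) 1 t := (hasDerivAt_id t).add_const T
  have h2 := (FF_hasDeriv hw (t+T)).comp t h1
  have h3 := h2.sub (FF_hasDeriv hw t)
  refine h3.congr_deriv ?_
  rw [hper t]; ring

lemma DG_hasDeriv (hw : Continuous w) (hper : ∀ s, w (s+T) = w s) (t : ℝ) :
    HasDerivAt (fun u => GG w (u+T) - GG w u)
      ((Real.sin (m*(t+T)) - Real.sin (m*t)) * w t) t := by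
  have h1 : HasDerivAt (fun u : ℝ => u + T) 1 t := (hasDerivAt_id t).add_const T
  have h2 := (GG_hasDeriv hw (t+T)).comp t h1
  have h3 := h2.sub (GG_hasDeriv hw t)
  refine h3.congr_deriv ?_
  rw [hper t]; ring

lemma cancel_id (t : ℝ) :
    Real.cos (m*(t + T/2)) * (Real.cos (m*(t+T)) - Real.cos (m*t))
      + Real.sin (m*(t + T/2)) * (Real.sin (m*(t+T)) - Real.sin (m*t)) = 0 := by
  rw [show m*(t+T) = m*(t + T/2) + m*T/2 by ring,
    show m*t = m*(t + T/2) - m*T/2 by ring,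
    Real.cos_add, Real.cos_sub, Real.sin_add, Real.sin_sub]
  ring

lemma key2_id (t : ℝ) :
    Real.cos (m*(t + T/2)) * (Real.sin (m*(t+T)) - Real.sin (m*t))
      - Real.sin (m*(t + T/2)) * (Real.cos (m*(t+T)) - Real.cos (m*t))
      = 2 * Real.sin (m*T/2) := by
  rw [show m*(t+T) = m*(t + T/2) + m*T/2 by ring,
    show m*t = m*(t + T/2) - m*T/2 by ring,
    Real.cos_add, Real.cos_sub, Real.sin_add, Real.sin_sub]
  linear_combination 2 * Real.sin (m*T/2) * (Real.sin_sq_add_cos_sq (m*(t + T/2)))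

lemma K_hasDeriv (hw : Continuous w) (hper : ∀ s, w (s+T) = w s) (t : ℝ) :
    HasDerivAt (K w) (K1 w t) t := by
  have H := (((p_hasDeriv t).mul (DF_hasDeriv hw hper t)).add
    ((q_hasDeriv t).mul (DG_hasDeriv hw hper t))).div_const C
  refine H.congr_deriv ?_
  unfold K1
  have hc := cancel_id t
  rw [div_eq_div_iff (ne_of_gt C_pos) (ne_of_gt C_pos)]
  linear_combination (w t * C) * hc

lemma K1_hasDeriv (hw : Continuous w) (hper : ∀ s, w (s+T) = w s) (t : ℝ) :
    HasDerivAt (K1 w) (w t - m^2 * K w t) t := by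
  have H := ((((p_hasDeriv t).mul (DG_hasDeriv hw hper t)).sub
    ((q_hasDeriv t).mul (DF_hasDeriv hw hper t))).const_mul m).div_const C
  refine H.congr_deriv ?_
  have hk := key2_id t
  have hC : C = 2 * m * Real.sin (m * T / 2) := rfl
  unfold K
  have e : ∀ num : ℝ, w t - m^2 * (num/C) = (w t * C - m^2 * num)/C := by
    intro num; field_simp [ne_of_gt C_pos]
  rw [e]
  rw [div_eq_div_iff (ne_of_gt C_pos) (ne_of_gt C_pos)]
  linear_combination (m * w t * C) * hk + (- w t * C) * hC

-- Part 6: fixed point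
lemma Nf_cont : Continuous Nf := by
  unfold Nf
  continuity

lemma psi_cont : Continuous psi := by
  have hcl : Continuous clamp := (continuous_id.max continuous_const).min continuous_const
  apply Continuous.rpow_const hcl
  intro y
  exact Or.inl (ne_of_gt (lt_of_lt_of_le (by norm_num) (clamp_mem y).1))

lemma gfun_cont {f : ℝ → ℝ} (hf : Continuous f) : Continuous (gfun f) := by
  unfold gfun
  exact ((Nf_cont.mul (psi_cont.comp hf)).add continuous_const).add
    (Real.continuous_cos.comp (continuous_const.mul continuous_id))

lemma gfun_abs (f : ℝ → ℝ) (t : ℝ) : |gfun f t| ≤ 12 := by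
  have := gfun_sub_ten f t
  rw [abs_le] at this ⊢
  constructor <;> nlinarith [this.1, this.2]

def Phi (f : BoundedContinuousFunction ℝ ℝ) : BoundedContinuousFunction ℝ ℝ :=
  BoundedContinuousFunction.ofNormedAddCommGroup (K (gfun f))
    (K_cont (gfun_cont f.continuous)) (82*12)
    (fun t => by
      rw [Real.norm_eq_abs]
      exact K_bound (gfun_cont f.continuous) (gfun_abs f) t)

lemma Phi_apply (f : BoundedContinuousFunction ℝ ℝ) (t : ℝ) : Phi f t = K (gfun f) t := rfl

lemma contract : ContractingWith (1/2 : ℝ≥0) Phi := by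
  constructor
  · rw [← NNReal.coe_lt_coe]; norm_num
  · apply LipschitzWith.of_dist_le_mul
    intro f g
    have hd : (0:ℝ) ≤ (1/2) * dist f g := by positivity
    rw [show (((1:ℝ≥0)/2 : ℝ≥0) : ℝ) * dist f g = (1/2) * dist f g by norm_num]
    rw [BoundedContinuousFunction.dist_le hd]
    intro t
    rw [Real.dist_eq, Phi_apply, Phi_apply,
      K_sub (gfun_cont f.continuous) (gfun_cont g.continuous)]
    have hwc : Continuous fun s => gfun f s - gfun g s :=
      (gfun_cont f.continuous).sub (gfun_cont g.continuous)
    have hB : ∀ s, |gfun f s - gfun g s| ≤ 0.0000104 * dist f g := by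
      intro s
      calc |gfun f s - gfun g s| ≤ 0.0000104 * |f s - g s| := gfun_lip f g s
        _ ≤ 0.0000104 * dist f g := by
            have := BoundedContinuousFunction.dist_coe_le_dist (f := f) (g := g) s
            rw [Real.dist_eq] at this
            nlinarith
    calc |K (fun s => gfun f s - gfun g s) t| ≤ 82 * (0.0000104 * dist f g) :=
          K_bound hwc hB t
      _ ≤ 1/2 * dist f g := by nlinarith [dist_nonneg (x := f) (y := g)]

def xhat : BoundedContinuousFunction ℝ ℝ := ContractingWith.fixedPoint Phi contract

lemma xhat_fix : Phi xhat = xhat := contract.fixedPoint_isFixedPt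

lemma xhat_eq (t : ℝ) : xhat t = K (gfun xhat) t :=
  (DFunLike.congr_fun xhat_fix t).symm

-- periodicity
lemma cos3_per (s : ℝ) : Real.cos (3*(s+T)) = Real.cos (3*s) := by
  rw [show 3*(s+T) = 3*s + 2*Real.pi by unfold T; ring, Real.cos_add_two_pi]

lemma sin3_per (s : ℝ) : Real.sin (3*(s+T)) = Real.sin (3*s) := by
  rw [show 3*(s+T) = 3*s + 2*Real.pi by unfold T; ring, Real.sin_add_two_pi]

lemma Nf_per (s : ℝ) : Nf (s+T) = Nf s := by
  unfold Nf; rw [cos3_per, sin3_per]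

lemma gfun_shift (f : ℝ → ℝ) : (fun s => gfun f (s+T)) = gfun (fun s => f (s+T)) := by
  funext s
  unfold gfun
  rw [Nf_per, cos3_per]

def shiftT : C(ℝ, ℝ) := ⟨fun t => t + T, by continuity⟩

lemma Phi_shift (f : BoundedContinuousFunction ℝ ℝ) :
    Phi (f.compContinuous shiftT) = (Phi f).compContinuous shiftT := by
  ext t
  rw [BoundedContinuousFunction.compContinuous_apply, Phi_apply, Phi_apply]
  show K (gfun (f.compContinuous shiftT)) t = K (gfun f) (shiftT t)
  rw [show shiftT t = t + T from rfl, K_shift (gfun_cont f.continuous) t, gfun_shift]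
  rfl

lemma xhat_per (t : ℝ) : xhat (t + T) = xhat t := by
  have h : Phi (xhat.compContinuous shiftT) = xhat.compContinuous shiftT := by
    rw [Phi_shift, xhat_fix]
  have h2 : xhat.compContinuous shiftT = xhat := contract.fixedPoint_unique h
  calc xhat (t+T) = (xhat.compContinuous shiftT) t := rfl
    _ = xhat t := by rw [h2]

-- Part 7: bounds and final assembly
lemma xhat_bounds (t : ℝ) : 317 ≤ xhat t ∧ xhat t ≤ 483 := by
  have hw : Continuous (gfun (xhat : ℝ → ℝ)) := gfun_cont xhat.continuous
  have e1 : K (gfun ⇑xhat) t - 400 = K (fun s => gfun ⇑xhat s - (fun _ => (10:ℝ)) s) t := by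
    rw [show (400:ℝ) = 40 * 10 by norm_num, ← K_const 10 t]
    exact K_sub hw continuous_const t
  have hbd := K_bound (w := fun s => gfun ⇑xhat s - (fun _ => (10:ℝ)) s)
    (hw.sub continuous_const) (B := 1.01) (fun s => gfun_sub_ten (⇑xhat) s) t
  rw [abs_le] at hbd
  have he := xhat_eq t
  constructor <;> nlinarith [hbd.1, hbd.2]

lemma gfun_xhat_per (s : ℝ) : gfun (⇑xhat) (s+T) = gfun (⇑xhat) s := by
  unfold gfun
  rw [Nf_per, cos3_per, xhat_per]

lemma xhat_pos (t : ℝ) : 0 < xhat t := lt_of_lt_of_le (by norm_num) (xhat_bounds t).1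

end Ex43
end

open Ex43 in
theorem example_4_3 :
    ∃ x : ℝ → ℝ,
      ContDiff ℝ 2 x ∧ (∀ t, 0 < x t) ∧
      (∀ t, x (t + 2 * Real.pi / 3) = x t) ∧
      ∀ t, deriv (deriv x) t + (1 / 40) * x t =
        (1 + 2 * Real.cos (3 * t)) / x t ^ ((3 : ℝ) / 2)
          + Real.exp (2 * Real.sin (3 * t)) / x t ^ ((3 : ℝ) / 2)
          + 10 + Real.cos (3 * t) := by
  have hw : Continuous (gfun (xhat : ℝ → ℝ)) := gfun_cont xhat.continuous
  have hper : ∀ s, gfun (⇑xhat) (s+T) = gfun (⇑xhat) s := gfun_xhat_per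
  have hfun : (⇑xhat : ℝ → ℝ) = K (gfun ⇑xhat) := funext xhat_eq
  have h1 : ∀ t, HasDerivAt (⇑xhat) (K1 (gfun ⇑xhat) t) t := fun t => by
    have h := K_hasDeriv hw hper t
    rwa [← hfun] at h
  have hd1 : deriv (⇑xhat) = K1 (gfun ⇑xhat) := funext fun t => (h1 t).deriv
  have h2 : ∀ t, HasDerivAt (K1 (gfun ⇑xhat))
      (gfun (⇑xhat) t - m^2 * K (gfun ⇑xhat) t) t := K1_hasDeriv hw hper
  have hd2 : ∀ t, deriv (deriv (⇑xhat)) t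
      = gfun (⇑xhat) t - m^2 * K (gfun ⇑xhat) t := by
    intro t; rw [hd1]; exact (h2 t).deriv
  refine ⟨(xhat : ℝ → ℝ), ?_, xhat_pos, ?_, ?_⟩
  · rw [show (2 : WithTop ℕ∞) = 1 + 1 by norm_num]
    rw [contDiff_succ_iff_deriv]
    refine ⟨fun t => (h1 t).differentiableAt, by simp, ?_⟩
    rw [hd1, contDiff_one_iff_deriv]
    refine ⟨fun t => (h2 t).differentiableAt, ?_⟩
    have : deriv (K1 (gfun ⇑xhat))
        = fun t => gfun (⇑xhat) t - m^2 * K (gfun ⇑xhat) t :=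
      funext fun t => (h2 t).deriv
    rw [this]
    exact hw.sub (continuous_const.mul (K_cont hw))
  · intro t
    exact xhat_per t
  · intro t
    rw [hd2 t]
    have hx : K (gfun ⇑xhat) t = xhat t := (xhat_eq t).symm
    have hm2 : m^2 = 1/40 := m_sq
    have hb := xhat_bounds t
    have hX : (0:ℝ) < xhat t ^ ((3:ℝ)/2) := Real.rpow_pos_of_pos (xhat_pos t) _
    have hpsi : psi (xhat t) = (xhat t ^ ((3:ℝ)/2))⁻¹ := by
      unfold psi
      rw [clamp_eq (by linarith [hb.1]) (by linarith [hb.2]),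
        show (-(3:ℝ)/2) = -((3:ℝ)/2) by norm_num,
        Real.rpow_neg (le_of_lt (xhat_pos t))]
    rw [hx, hm2]
    unfold gfun Nf
    rw [hpsi]
    field_simp
    ring
end
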